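/- arXiv:1206.3376 — 4 statements merged into one kernel-verified Lean document; each statement's English description precedes it below -/
import Mathlib

section
/- Let R > 0 and let B be a compact topological space. Let φ : ℝ × B → ℂ be such that for every b ∈ B the function t ↦ φ(t,b) is infinitely differentiable, for every k ∈ ℕ the function (t,b) ↦ (d/dt)^k φ(t,b) is continuous on ℝ × B, and φ(t,b) = 0 whenever |t| > R. Define F(z,b) = ∫_ℝ φ(t,b) e^{-z t} dt for z ∈ ℂ, b ∈ B. Then F is continuous on ℂ × B, for each fixed b ∈ B the function z ↦ F(z,b) is entire, and for every N ∈ ℕ one has sup_{z ∈ ℂ, b ∈ B} e^{-R|Re z|} (1+|z|)^N |F(z,b)| < ∞. -/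
open MeasureTheory Complex

private lemma iteratedDeriv_zero_fun' {k : ℕ} :
    iteratedDeriv k (fun _ : ℝ => (0 : ℂ)) = fun _ => (0 : ℂ) := by
  induction k with
  | zero => simp [iteratedDeriv_zero]
  | succ n ih =>
      rw [iteratedDeriv_succ']
      simpa [deriv_const'] using ih

/-- **Paley–Wiener theorem on ℝ × B, forward direction** (Theorem 2.1.8 of the paper).
If `φ : ℝ × B → ℂ` is smooth in the first variable with all `t`-derivatives jointly
continuous, and is supported in `{|t| ≤ R} × B`, then its Fourier transform in the first
variable, `F (z, b) = ∫ φ (t, b) e^{-zt} dt`, is continuous on `ℂ × B`, entire in `z`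
for each fixed `b`, and of uniform exponential type `R` with rapid decay. -/
theorem stmt_0 {B : Type*} [TopologicalSpace B] [CompactSpace B]
    (R : ℝ) (hR : 0 < R) (φ : ℝ × B → ℂ)
    (hsmooth : ∀ b : B, ContDiff ℝ (⊤ : ℕ∞) fun t : ℝ => φ (t, b))
    (hcont : ∀ k : ℕ,
      Continuous fun p : ℝ × B => iteratedDeriv k (fun t : ℝ => φ (t, p.2)) p.1)
    (hsupp : ∀ (t : ℝ) (b : B), R < |t| → φ (t, b) = 0)
    (F : ℂ × B → ℂ)
    (hF : ∀ (z : ℂ) (b : B),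
      F (z, b) = ∫ t : ℝ, φ (t, b) * Complex.exp (-(z * (t : ℂ)))) :
    Continuous F ∧
    (∀ b : B, Differentiable ℂ fun z : ℂ => F (z, b)) ∧
    ∀ N : ℕ, ∃ C : ℝ, ∀ (z : ℂ) (b : B),
      Real.exp (-(R * |z.re|)) * (1 + ‖z‖) ^ N * ‖F (z, b)‖ ≤ C := by
  classical
  set K : Set ℝ := Set.Icc (-R) R with hKdef
  have hKc : IsCompact K := isCompact_Icc
  set f : ℕ → B → ℝ → ℂ := fun k b t => iteratedDeriv k (fun t : ℝ => φ (t, b)) t with hfdef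
  -- continuity of φ
  have hφcont : Continuous fun p : ℝ × B => φ p := by
    simpa [iteratedDeriv_zero] using hcont 0
  -- support of iterated derivatives
  have hfsupp : ∀ (k : ℕ) (b : B) (t : ℝ), R < |t| → f k b t = 0 := by
    intro k b t ht
    have hopen : IsOpen {t : ℝ | R < |t|} := isOpen_lt continuous_const continuous_abs
    have heq : Set.EqOn (fun t : ℝ => φ (t, b)) (fun _ => (0 : ℂ)) {t : ℝ | R < |t|} :=
      fun x hx => hsupp x b hx
    have := heq.iteratedDeriv_of_isOpen hopen k ht
    simpa [hfdef, iteratedDeriv_zero_fun'] using this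
  have hmemK : ∀ t : ℝ, t ∉ K → R < |t| := by
    intro t ht
    simp only [hKdef, Set.mem_Icc, not_and_or, not_le] at ht
    rcases ht with h | h
    · rw [lt_abs]; right; linarith
    · rw [lt_abs]; left; exact h
  have hfcont : ∀ (k : ℕ) (b : B), Continuous (f k b) := by
    intro k b
    exact (hcont k).comp (continuous_id.prodMk continuous_const)
  have hfCS : ∀ (k : ℕ) (b : B), HasCompactSupport (f k b) := by
    intro k b
    exact HasCompactSupport.intro hKc fun t ht => hfsupp k b t (hmemK t ht)
  have hexpc : ∀ z : ℂ, Continuous fun t : ℝ => Complex.exp (-(z * (t : ℂ))) := by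
    intro z
    exact Complex.continuous_exp.comp (continuous_const.mul Complex.continuous_ofReal).neg
  have hint : ∀ (k : ℕ) (b : B) (z : ℂ),
      Integrable (fun t : ℝ => f k b t * Complex.exp (-(z * (t : ℂ)))) := by
    intro k b z
    exact ((hfcont k b).mul (hexpc z)).integrable_of_hasCompactSupport ((hfCS k b).mul_right)
  -- derivative formula
  have hderiv : ∀ (k : ℕ) (b : B) (z : ℂ) (t : ℝ),
      HasDerivAt (fun t : ℝ => f k b t * Complex.exp (-(z * (t : ℂ))))
        (f (k+1) b t * Complex.exp (-(z * (t : ℂ)))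
          + f k b t * (-z * Complex.exp (-(z * (t : ℂ))))) t := by
    intro k b z t
    have hd : Differentiable ℝ (f k b) := by
      exact (hsmooth b).differentiable_iteratedDeriv k (by exact_mod_cast lt_top_iff_ne_top.2 (by simp))
    have h1 : HasDerivAt (f k b) (f (k+1) b t) t := by
      have := (hd t).hasDerivAt
      simpa [hfdef, iteratedDeriv_succ] using this
    have h3 : HasDerivAt (fun y : ℂ => Complex.exp (-(z * y)))
        (-z * Complex.exp (-(z * (t : ℂ)))) (t : ℂ) := by
      simpa [mul_comm] using ((hasDerivAt_id (t : ℂ)).const_mul z).neg.cexp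
    exact h1.mul h3.comp_ofReal
  -- integration by parts
  have hIBP : ∀ (k : ℕ) (b : B) (z : ℂ),
      (∫ t : ℝ, f (k+1) b t * Complex.exp (-(z * (t : ℂ))))
        = z * ∫ t : ℝ, f k b t * Complex.exp (-(z * (t : ℂ))) := by
    intro k b z
    have h2 : Integrable (fun t : ℝ => f k b t * (-z * Complex.exp (-(z * (t : ℂ))))) := by
      have := (hint k b z).const_mul (-z)
      simpa [mul_comm, mul_left_comm, mul_assoc] using this
    have hzero :
        (∫ t : ℝ, (f (k+1) b t * Complex.exp (-(z * (t : ℂ)))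
          + f k b t * (-z * Complex.exp (-(z * (t : ℂ)))))) = 0 :=
      integral_eq_zero_of_hasDerivAt_of_integrable (hderiv k b z)
        ((hint (k+1) b z).add h2) (hint k b z)
    rw [integral_add (hint (k+1) b z) h2] at hzero
    have h3 : (∫ t : ℝ, f k b t * (-z * Complex.exp (-(z * (t : ℂ)))))
        = -z * ∫ t : ℝ, f k b t * Complex.exp (-(z * (t : ℂ))) := by
      have heq : (fun t : ℝ => f k b t * (-z * Complex.exp (-(z * (t : ℂ)))))
          = fun t : ℝ => -z • (f k b t * Complex.exp (-(z * (t : ℂ)))) := by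
        funext t; simp [smul_eq_mul]; ring
      rw [heq, integral_smul, smul_eq_mul]
    rw [h3] at hzero
    linear_combination hzero
  -- the power identity
  have hpow : ∀ (k : ℕ) (z : ℂ) (b : B),
      (∫ t : ℝ, f k b t * Complex.exp (-(z * (t : ℂ)))) = z ^ k * F (z, b) := by
    intro k
    induction k with
    | zero =>
        intro z b
        simp only [hfdef, iteratedDeriv_zero, pow_zero, one_mul, hF z b]
    | succ n ih =>
        intro z b
        rw [hIBP n b z, ih z b]; ring
  -- uniform bounds on iterated derivatives
  have hMk : ∀ k : ℕ, ∃ M : ℝ, 0 ≤ M ∧ ∀ (t : ℝ) (b : B), ‖f k b t‖ ≤ M := by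
    intro k
    obtain ⟨M, hM⟩ := (hKc.prod isCompact_univ).exists_bound_of_continuousOn
      ((hcont k).continuousOn)
    refine ⟨max M 0, le_max_right _ _, fun t b => ?_⟩
    by_cases ht : t ∈ K
    · have := hM (t, b) (by simp [ht])
      exact this.trans (le_max_left _ _)
    · rw [hfsupp k b t (hmemK t ht)]
      simp
  -- the per-power bound
  have hbound : ∀ k : ℕ, ∃ D : ℝ, 0 ≤ D ∧ ∀ (z : ℂ) (b : B),
      Real.exp (-(R * |z.re|)) * (‖z‖ ^ k * ‖F (z, b)‖) ≤ D := by
    intro k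
    obtain ⟨M, hM0, hM⟩ := hMk k
    refine ⟨2 * R * M, by positivity, fun z b => ?_⟩
    have hptwise : ∀ t : ℝ, ‖f k b t * Complex.exp (-(z * (t : ℂ)))‖
        ≤ K.indicator (fun _ => M * Real.exp (R * |z.re|)) t := by
      intro t
      by_cases ht : t ∈ K
      · rw [Set.indicator_of_mem ht]
        rw [norm_mul, Complex.norm_exp]
        have hre : (-(z * (t : ℂ))).re = -(z.re * t) := by simp
        rw [hre]
        have h1 : -(z.re * t) ≤ R * |z.re| := by
          calc -(z.re * t) ≤ |z.re * t| := neg_le_abs _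
            _ = |z.re| * |t| := abs_mul _ _
            _ ≤ |z.re| * R := by
                have : |t| ≤ R := by
                  rw [abs_le]; exact ⟨ht.1, ht.2⟩
                exact mul_le_mul_of_nonneg_left this (abs_nonneg _)
            _ = R * |z.re| := mul_comm _ _
        exact mul_le_mul (hM t b) (Real.exp_le_exp.2 h1) (Real.exp_pos _).le hM0
      · rw [Set.indicator_of_notMem ht, hfsupp k b t (hmemK t ht)]
        simp
    have hbint : Integrable (K.indicator (fun _ : ℝ => M * Real.exp (R * |z.re|))) := by
      rw [integrable_indicator_iff hKc.measurableSet]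
      exact integrableOn_const hKc.measure_lt_top.ne
    have h1 : ‖z ^ k * F (z, b)‖ ≤ 2 * R * M * Real.exp (R * |z.re|) := by
      rw [← hpow k z b]
      calc ‖∫ t : ℝ, f k b t * Complex.exp (-(z * (t : ℂ)))‖
          ≤ ∫ t : ℝ, K.indicator (fun _ => M * Real.exp (R * |z.re|)) t :=
            norm_integral_le_of_norm_le hbint (Filter.Eventually.of_forall hptwise)
        _ = (volume K).toReal • (M * Real.exp (R * |z.re|)) :=
            integral_indicator_const _ hKc.measurableSet
        _ = 2 * R * M * Real.exp (R * |z.re|) := by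
            rw [hKdef, Real.volume_Icc]
            rw [ENNReal.toReal_ofReal (by linarith)]
            rw [smul_eq_mul]; ring
    rw [norm_mul, norm_pow] at h1
    rw [Real.exp_neg]
    rw [inv_mul_le_iff₀ (Real.exp_pos _)]
    calc ‖z‖ ^ k * ‖F (z, b)‖ ≤ 2 * R * M * Real.exp (R * |z.re|) := h1
      _ = Real.exp (R * |z.re|) * (2 * R * M) := by ring
  refine ⟨?_, ?_, ?_⟩
  · -- continuity
    have hintφ : ∀ (b : B) (z : ℂ),
        Integrable (fun t : ℝ => φ (t, b) * Complex.exp (-(z * (t : ℂ)))) := by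
      intro b z
      have := hint 0 b z
      simpa [hfdef, iteratedDeriv_zero] using this
    rw [continuous_iff_continuousAt]
    intro p₀
    rw [ContinuousAt, Metric.tendsto_nhds]
    intro ε hε
    set ε' : ℝ := ε / (2 * R + 1) with hε'def
    have hε' : 0 < ε' := by positivity
    set G : ℝ × (ℂ × B) → ℂ := fun q => φ (q.1, q.2.2) * Complex.exp (-(q.2.1 * (q.1 : ℂ)))
      with hGdef
    have hGcont : Continuous G := by
      apply Continuous.mul
      · exact hφcont.comp (continuous_fst.prodMk (continuous_snd.snd))
      · exact Complex.continuous_exp.comp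
          ((continuous_snd.fst.mul (Complex.continuous_ofReal.comp continuous_fst)).neg)
    set U : Set (ℝ × (ℂ × B)) := {q | dist (G q) (G (q.1, p₀)) < ε'} with hUdef
    have hUopen : IsOpen U :=
      isOpen_lt (Continuous.dist hGcont (hGcont.comp (continuous_fst.prodMk continuous_const)))
        continuous_const
    have hsub : K ×ˢ ({p₀} : Set (ℂ × B)) ⊆ U := by
      rintro ⟨t, p⟩ ⟨-, hp⟩
      simp only [Set.mem_singleton_iff] at hp
      subst hp
      simpa [hUdef] using hε'
    obtain ⟨u, v, hu, hv, hKu, hp₀v, huv⟩ :=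
      generalized_tube_lemma hKc isCompact_singleton hUopen hsub
    filter_upwards [hv.mem_nhds (hp₀v rfl)] with p hp
    obtain ⟨z, b⟩ := p
    obtain ⟨z₀, b₀⟩ := p₀
    rw [dist_eq_norm, hF z b, hF z₀ b₀, ← integral_sub (hintφ b z) (hintφ b₀ z₀)]
    have hptwise : ∀ t : ℝ,
        ‖φ (t, b) * Complex.exp (-(z * (t : ℂ))) - φ (t, b₀) * Complex.exp (-(z₀ * (t : ℂ)))‖
          ≤ K.indicator (fun _ => ε') t := by
      intro t
      by_cases ht : t ∈ K
      · rw [Set.indicator_of_mem ht]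
        have htu : (t, (z, b)) ∈ u ×ˢ v := ⟨hKu ht, hp⟩
        have : dist (G (t, (z, b))) (G (t, (z₀, b₀))) < ε' := huv htu
        simpa [hUdef, hGdef, dist_eq_norm] using this.le
      · rw [Set.indicator_of_notMem ht, hsupp t b (hmemK t ht), hsupp t b₀ (hmemK t ht)]
        simp
    have hbint : Integrable (K.indicator (fun _ : ℝ => ε')) := by
      rw [integrable_indicator_iff hKc.measurableSet]
      exact integrableOn_const hKc.measure_lt_top.ne
    calc ‖∫ t : ℝ, (φ (t, b) * Complex.exp (-(z * (t : ℂ)))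
            - φ (t, b₀) * Complex.exp (-(z₀ * (t : ℂ))))‖
        ≤ ∫ t : ℝ, K.indicator (fun _ => ε') t :=
          norm_integral_le_of_norm_le hbint (Filter.Eventually.of_forall hptwise)
      _ = (volume K).toReal • ε' := integral_indicator_const _ hKc.measurableSet
      _ = 2 * R * ε' := by
          rw [hKdef, Real.volume_Icc, ENNReal.toReal_ofReal (by linarith), smul_eq_mul]; ring
      _ < ε := by
          rw [hε'def]
          calc 2 * R * (ε / (2 * R + 1)) < (2 * R + 1) * (ε / (2 * R + 1)) := by
                apply mul_lt_mul_of_pos_right (by linarith) (by positivity)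
            _ = ε := by field_simp
  · -- differentiability in z
    intro b
    intro z₀
    obtain ⟨M, hM0, hM⟩ := hMk 0
    have hM' : ∀ t : ℝ, ‖φ (t, b)‖ ≤ M := by
      intro t
      have := hM t b
      simpa [hfdef, iteratedDeriv_zero] using this
    have key := hasDerivAt_integral_of_dominated_loc_of_deriv_le (μ := volume)
      (F := fun (x : ℂ) (t : ℝ) => φ (t, b) * Complex.exp (-(x * (t : ℂ))))
      (F' := fun (x : ℂ) (t : ℝ) => φ (t, b) * (-(t : ℂ) * Complex.exp (-(x * (t : ℂ)))))
      (x₀ := z₀) (s := Metric.ball z₀ 1)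
      (bound := K.indicator (fun _ : ℝ => M * R * Real.exp ((‖z₀‖ + 1) * R)))
      (Metric.ball_mem_nhds z₀ one_pos) ?_ ?_ ?_ ?_ ?_ ?_
    · have : HasDerivAt (fun z : ℂ => F (z, b))
          (∫ t : ℝ, φ (t, b) * (-(t : ℂ) * Complex.exp (-(z₀ * (t : ℂ))))) z₀ := by
        have h2 := key.2
        apply h2.congr_of_eventuallyEq
        filter_upwards with z
        rw [hF z b]
      exact this.differentiableAt
    · filter_upwards with x
      have h0 : Continuous fun t : ℝ => φ (t, b) :=
        hφcont.comp (continuous_id.prodMk continuous_const)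
      exact (h0.mul (hexpc x)).aestronglyMeasurable
    · have h0 := hint 0 b z₀
      simpa [hfdef, iteratedDeriv_zero] using h0
    · have h0 : Continuous fun t : ℝ => φ (t, b) :=
        hφcont.comp (continuous_id.prodMk continuous_const)
      exact (h0.mul ((Complex.continuous_ofReal.neg.mul (hexpc z₀)))).aestronglyMeasurable
    · filter_upwards with t
      intro x hx
      have hxn : ‖x‖ ≤ ‖z₀‖ + 1 := by
        have := mem_ball_iff_norm.mp hx
        calc ‖x‖ = ‖z₀ + (x - z₀)‖ := by ring_nf
          _ ≤ ‖z₀‖ + ‖x - z₀‖ := norm_add_le _ _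
          _ ≤ ‖z₀‖ + 1 := by linarith
      by_cases ht : t ∈ K
      · rw [Set.indicator_of_mem ht]
        have htR : |t| ≤ R := by rw [abs_le]; exact ⟨ht.1, ht.2⟩
        rw [norm_mul, norm_mul]
        rw [Complex.norm_exp]
        have hre : (-(x * (t : ℂ))).re = -(x.re * t) := by simp
        rw [hre]
        have h1 : -(x.re * t) ≤ (‖z₀‖ + 1) * R := by
          calc -(x.re * t) ≤ |x.re * t| := neg_le_abs _
            _ = |x.re| * |t| := abs_mul _ _
            _ ≤ ‖x‖ * R :=
                mul_le_mul (Complex.abs_re_le_norm x) htR (abs_nonneg _) (norm_nonneg _)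
            _ ≤ (‖z₀‖ + 1) * R := mul_le_mul_of_nonneg_right hxn hR.le
        have h2 : ‖(-(t : ℂ))‖ ≤ R := by
          rw [norm_neg, Complex.norm_real, Real.norm_eq_abs]; exact htR
        calc ‖φ (t, b)‖ * (‖(-(t : ℂ))‖ * Real.exp (-(x.re * t)))
            ≤ M * (R * Real.exp ((‖z₀‖ + 1) * R)) := by
              apply mul_le_mul (hM' t)
              · exact mul_le_mul h2 (Real.exp_le_exp.2 h1) (Real.exp_pos _).le
                  ((norm_nonneg _).trans h2)
              · positivity
              · exact hM0
          _ = M * R * Real.exp ((‖z₀‖ + 1) * R) := by ring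
      · rw [Set.indicator_of_notMem ht, hsupp t b (hmemK t ht)]
        simp
    · rw [integrable_indicator_iff hKc.measurableSet]
      exact integrableOn_const hKc.measure_lt_top.ne
    · filter_upwards with t
      intro x hx
      have := (((hasDerivAt_id x).mul_const ((t : ℂ))).neg.cexp).const_mul (φ (t, b))
      refine this.congr_deriv ?_
      simp only [Pi.neg_apply, id_eq]
      ring
  · -- the exponential-type bound
    intro N
    choose D hD0 hDb using hbound
    refine ⟨∑ k ∈ Finset.range (N+1), (N.choose k : ℝ) * D k, fun z b => ?_⟩
    have hexp : (1 + ‖z‖) ^ N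
        = ∑ k ∈ Finset.range (N+1), ‖z‖ ^ k * (N.choose k : ℝ) := by
      rw [add_comm, add_pow]
      exact Finset.sum_congr rfl fun k _ => by rw [one_pow, mul_one]
    calc Real.exp (-(R * |z.re|)) * (1 + ‖z‖) ^ N * ‖F (z, b)‖
        = ∑ k ∈ Finset.range (N+1), (N.choose k : ℝ)
            * (Real.exp (-(R * |z.re|)) * (‖z‖ ^ k * ‖F (z, b)‖)) := by
          rw [hexp, Finset.mul_sum, Finset.sum_mul]
          exact Finset.sum_congr rfl fun k _ => by ring
      _ ≤ ∑ k ∈ Finset.range (N+1), (N.choose k : ℝ) * D k := by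
          apply Finset.sum_le_sum
          intro k _
          exact mul_le_mul_of_nonneg_left (hDb k z b) (by positivity)
end

section
/- Let a > 0 and let f ∈ 𝓢_a(ℝ), i.e. f : ℝ → ℂ is smooth with sup_{t ∈ ℝ} (1+|t|)^N cosh(a t) |f^{(k)}(t)| < ∞ for all N, k ∈ ℕ. Then F(z) = ∫_ℝ f(t) e^{-z t} dt converges absolutely for every z in the closed strip S_a = {z ∈ ℂ : |Re z| ≤ a}, F is continuous on S_a and holomorphic on the open strip S_a° = {z : |Re z| < a}, for every m ∈ ℕ the m-th derivative of F on S_a° is given by z ↦ ∫_ℝ (-t)^m f(t) e^{-z t} dt, which is continuous on all of S_a, and for every N, m ∈ ℕ there is a constant C > 0, depending only on a, N, m, such that sup_{z ∈ S_a} (1+|z|)^N |F^{(m)}(z)| ≤ C · max_{k ≤ N} sup_{t ∈ ℝ} (1+|t|)^{m+2} cosh(a t) |f^{(k)}(t)|. -/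
open MeasureTheory Complex
open Metric

/-- The weighted-Schwartz seminorm bounds: all seminorms
`sup_t (1+|t|)^N cosh(at) |f^{(k)}(t)|` are finite. Together with smoothness this
defines the weighted Schwartz space `𝓢_a(ℝ)`. -/
def WSchwartzBdd (a : ℝ) (f : ℝ → ℂ) : Prop :=
  ∀ N k : ℕ, ∃ C : ℝ, ∀ t : ℝ,
    (1 + |t|) ^ N * Real.cosh (a * t) * ‖iteratedDeriv k f t‖ ≤ C

lemma exp_abs_le_two_cosh (y : ℝ) : Real.exp |y| ≤ 2 * Real.cosh y := by
  rw [Real.cosh_eq]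
  rcases abs_cases y with ⟨h, _⟩ | ⟨h, _⟩ <;> rw [h] <;>
    nlinarith [Real.exp_pos y, Real.exp_pos (-y)]

lemma exp_le_two_cosh {a x t : ℝ} (ha : 0 < a) (hx : |x| ≤ a) :
    Real.exp (-(x * t)) ≤ 2 * Real.cosh (a * t) := by
  have h1 : -(x * t) ≤ |a * t| := by
    calc -(x*t) ≤ |x*t| := neg_le_abs _
    _ ≤ |a*t| := by rw [abs_mul, abs_mul, abs_of_pos ha]; exact mul_le_mul_of_nonneg_right hx (abs_nonneg t)
  calc Real.exp (-(x*t)) ≤ Real.exp |a*t| := Real.exp_le_exp.2 h1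
  _ ≤ 2 * Real.cosh (a*t) := exp_abs_le_two_cosh _

lemma norm_mul_exp (g : ℝ → ℂ) (z : ℂ) (t : ℝ) :
    ‖g t * Complex.exp (-(z * t))‖ = ‖g t‖ * Real.exp (-(z.re * t)) := by
  rw [norm_mul, Complex.norm_exp]
  simp

lemma norm_integrand_le {a : ℝ} (ha : 0 < a) (C : ℝ) {g : ℝ → ℂ}
    (hg : ∀ t, (1 + |t|) ^ 2 * Real.cosh (a * t) * ‖g t‖ ≤ C)
    {z : ℂ} (hz : |z.re| ≤ a) (t : ℝ) :
    ‖g t * Complex.exp (-(z * t))‖ ≤ 2 * C * (1 + t ^ 2)⁻¹ := by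
  rw [norm_mul_exp]
  have h1 : Real.exp (-(z.re * t)) ≤ 2 * Real.cosh (a * t) := exp_le_two_cosh ha hz
  have h2 : (0:ℝ) < 1 + t ^ 2 := by positivity
  have h3 : 1 + t ^ 2 ≤ (1 + |t|) ^ 2 := by nlinarith [abs_nonneg t, _root_.sq_abs t]
  have h5 : (0:ℝ) < Real.cosh (a*t) := Real.cosh_pos _
  rw [mul_comm (2*C), ← div_eq_inv_mul, le_div_iff₀ h2]
  calc ‖g t‖ * Real.exp (-(z.re * t)) * (1 + t ^ 2)
      ≤ ‖g t‖ * (2 * Real.cosh (a*t)) * (1 + t ^ 2) := by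
        gcongr
    _ = 2 * ((1 + t^2) * Real.cosh (a*t) * ‖g t‖) := by ring
    _ ≤ 2 * ((1 + |t|)^2 * Real.cosh (a*t) * ‖g t‖) := by
        gcongr
    _ ≤ 2 * C := by linarith [hg t]

lemma bound_integrable (C : ℝ) : Integrable (fun t : ℝ => 2 * C * (1 + t ^ 2)⁻¹) :=
  integrable_inv_one_add_sq.const_mul _

lemma integrand_continuous {g : ℝ → ℂ} (hgc : Continuous g) (z : ℂ) :
    Continuous (fun t : ℝ => g t * Complex.exp (-(z * t))) := by
  fun_prop

lemma integrable_aux {a : ℝ} (ha : 0 < a) {g : ℝ → ℂ} (hgc : Continuous g) {C : ℝ}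
    (hg : ∀ t, (1 + |t|) ^ 2 * Real.cosh (a * t) * ‖g t‖ ≤ C)
    {z : ℂ} (hz : |z.re| ≤ a) :
    Integrable (fun t : ℝ => g t * Complex.exp (-(z * t))) :=
  (bound_integrable C).mono' (integrand_continuous hgc z).aestronglyMeasurable
    (Filter.Eventually.of_forall fun t => norm_integrand_le ha C hg hz t)

lemma norm_integral_le_aux {a : ℝ} (ha : 0 < a) {g : ℝ → ℂ} (hgc : Continuous g) {C : ℝ}
    (hg : ∀ t, (1 + |t|) ^ 2 * Real.cosh (a * t) * ‖g t‖ ≤ C)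
    {z : ℂ} (hz : |z.re| ≤ a) :
    ‖∫ t : ℝ, g t * Complex.exp (-(z * t))‖ ≤ 8 * C := by
  have hC : 0 ≤ C := le_trans (by positivity) (hg 0)
  have h1 : ‖∫ t : ℝ, g t * Complex.exp (-(z * t))‖
      ≤ ∫ t : ℝ, 2 * C * (1 + t ^ 2)⁻¹ := by
    exact norm_integral_le_of_norm_le (bound_integrable C)
      (Filter.Eventually.of_forall fun t => norm_integrand_le ha C hg hz t)
  have h2 : ∫ t : ℝ, 2 * C * (1 + t ^ 2)⁻¹ = 2 * C * Real.pi := by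
    rw [integral_const_mul, integral_univ_inv_one_add_sq]
  nlinarith [Real.pi_le_four]

lemma continuousOn_aux {a : ℝ} (ha : 0 < a) {g : ℝ → ℂ} (hgc : Continuous g) {C : ℝ}
    (hg : ∀ t, (1 + |t|) ^ 2 * Real.cosh (a * t) * ‖g t‖ ≤ C) :
    ContinuousOn (fun z : ℂ => ∫ t : ℝ, g t * Complex.exp (-(z * t))) {z : ℂ | |z.re| ≤ a} := by
  intro z₀ hz₀
  apply continuousWithinAt_of_dominated (bound := fun t => 2 * C * (1 + t ^ 2)⁻¹)
  · exact Filter.Eventually.of_forall fun z =>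
      (integrand_continuous hgc z).aestronglyMeasurable
  · filter_upwards [self_mem_nhdsWithin] with z hz
    exact Filter.Eventually.of_forall fun t => norm_integrand_le ha C hg hz t
  · exact bound_integrable C
  · refine Filter.Eventually.of_forall fun t => Continuous.continuousWithinAt ?_
    fun_prop

lemma hasDerivAt_exp_aux (z : ℂ) (t : ℝ) :
    HasDerivAt (fun x : ℂ => Complex.exp (-(x * (t:ℂ)))) (-(t:ℂ) * Complex.exp (-(z * t))) z := by
  have h : HasDerivAt (fun x : ℂ => -(x * (t:ℂ))) (-(t:ℂ)) z := (hasDerivAt_mul_const (t:ℂ)).neg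
  simpa [mul_comm] using h.cexp

lemma hasDerivAt_aux {a : ℝ} (ha : 0 < a) {g : ℝ → ℂ} (hgc : Continuous g) {C C' : ℝ}
    (hg : ∀ t, (1 + |t|) ^ 2 * Real.cosh (a * t) * ‖g t‖ ≤ C)
    (hg' : ∀ t, (1 + |t|) ^ 2 * Real.cosh (a * t) * ‖(-(t:ℂ)) * g t‖ ≤ C')
    {z : ℂ} (hz : |z.re| < a) :
    HasDerivAt (fun z : ℂ => ∫ t : ℝ, g t * Complex.exp (-(z * t)))
      (∫ t : ℝ, (-(t:ℂ)) * g t * Complex.exp (-(z * t))) z := by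
  have hgc' : Continuous fun t : ℝ => (-(t:ℂ)) * g t := by fun_prop
  have hball : ∀ x ∈ ball z (a - |z.re|), |x.re| ≤ a := by
    intro x hx
    have : |x.re - z.re| ≤ ‖x - z‖ := by
      simpa using Complex.abs_re_le_norm (x - z)
    have hd : ‖x - z‖ < a - |z.re| := by
      simpa [Complex.dist_eq] using (mem_ball.1 hx)
    calc |x.re| ≤ |x.re - z.re| + |z.re| := by
          simpa using abs_add_le (x.re - z.re) z.re
    _ ≤ a := by linarith
  refine (hasDerivAt_integral_of_dominated_loc_of_deriv_le
    (bound := fun t => 2 * C' * (1 + t ^ 2)⁻¹)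
    (F' := fun x (t : ℝ) => (-(t:ℂ)) * g t * Complex.exp (-(x * t)))
    (ball_mem_nhds z (show (0:ℝ) < a - |z.re| by linarith)) ?_ ?_ ?_ ?_ ?_ ?_).2
  · exact Filter.Eventually.of_forall fun x =>
      (integrand_continuous hgc x).aestronglyMeasurable
  · exact integrable_aux ha hgc hg hz.le
  · exact (integrand_continuous hgc' z).aestronglyMeasurable
  · refine Filter.Eventually.of_forall fun t => fun x hx => ?_
    exact norm_integrand_le ha C' hg' (hball x hx) t
  · exact bound_integrable C'
  · refine Filter.Eventually.of_forall fun t => fun x hx => ?_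
    simpa [mul_assoc, mul_comm, mul_left_comm] using
      (hasDerivAt_exp_aux x t).const_mul (g t)

lemma tendsto_bound_atTop (C : ℝ) :
    Filter.Tendsto (fun t : ℝ => 2 * C * (1 + t ^ 2)⁻¹) Filter.atTop (nhds 0) := by
  rw [show (0:ℝ) = 2 * C * 0 by ring]
  exact Filter.Tendsto.const_mul _
    (Filter.Tendsto.inv_tendsto_atTop
      (Filter.tendsto_atTop_add_const_left _ 1 (Filter.tendsto_pow_atTop two_ne_zero)))

lemma tendsto_bound_atBot (C : ℝ) :
    Filter.Tendsto (fun t : ℝ => 2 * C * (1 + t ^ 2)⁻¹) Filter.atBot (nhds 0) := by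
  have := (tendsto_bound_atTop C).comp Filter.tendsto_neg_atBot_atTop
  simpa [Function.comp_def] using this

lemma ibp_aux {a : ℝ} (ha : 0 < a) {g g' : ℝ → ℂ} (hgc : Continuous g)
    (hgd : ∀ t, HasDerivAt g (g' t) t) (hg'c : Continuous g') {C C' : ℝ}
    (hg : ∀ t, (1 + |t|) ^ 2 * Real.cosh (a * t) * ‖g t‖ ≤ C)
    (hg' : ∀ t, (1 + |t|) ^ 2 * Real.cosh (a * t) * ‖g' t‖ ≤ C')
    {z : ℂ} (hz : |z.re| ≤ a) :
    z * ∫ t : ℝ, g t * Complex.exp (-(z * t))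
      = ∫ t : ℝ, g' t * Complex.exp (-(z * t)) := by
  set h : ℝ → ℂ := fun t => g t * Complex.exp (-(z * t)) with hh
  set φ : ℝ → ℂ := fun t => g' t * Complex.exp (-(z * t)) - z * (g t * Complex.exp (-(z * t)))
    with hφ
  have hexp : ∀ t : ℝ, HasDerivAt (fun t : ℝ => Complex.exp (-(z * (t:ℂ))))
      (Complex.exp (-(z * t)) * (-z)) t := by
    intro t
    have h1 : HasDerivAt (fun t : ℝ => -(z * (t:ℂ))) (-z) t := by
      exact (((Complex.ofRealCLM.hasDerivAt (x := t)).const_mul z).neg).congr_deriv (by simp)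
    exact h1.cexp
  have hderiv : ∀ t : ℝ, HasDerivAt h (φ t) t := by
    intro t
    have := (hgd t).mul (hexp t)
    exact this.congr_deriv (by simp only [hφ]; ring)
  have hφint : Integrable φ := by
    exact ((integrable_aux ha hg'c hg' hz).sub
      ((integrable_aux ha hgc hg hz).const_mul z))
  have htop : Filter.Tendsto h Filter.atTop (nhds 0) :=
    squeeze_zero_norm (fun t => norm_integrand_le ha C hg hz t) (tendsto_bound_atTop C)
  have hbot : Filter.Tendsto h Filter.atBot (nhds 0) :=
    squeeze_zero_norm (fun t => norm_integrand_le ha C hg hz t) (tendsto_bound_atBot C)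
  have hcont : Continuous h := integrand_continuous hgc z
  have hIic : ∫ t in Set.Iic (0:ℝ), φ t = h 0 - 0 :=
    integral_Iic_of_hasDerivAt_of_tendsto hcont.continuousWithinAt
      (fun x _ => hderiv x) hφint.integrableOn hbot
  have hIoi : ∫ t in Set.Ioi (0:ℝ), φ t = 0 - h 0 :=
    integral_Ioi_of_hasDerivAt_of_tendsto hcont.continuousWithinAt
      (fun x _ => hderiv x) hφint.integrableOn htop
  have hsum : ∫ t : ℝ, φ t = 0 := by
    rw [← intervalIntegral.integral_Iic_add_Ioi (b := (0:ℝ)) hφint.integrableOn hφint.integrableOn,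
      hIic, hIoi]
    ring
  have := hsum
  rw [hφ] at this
  rw [integral_sub (integrable_aux ha hg'c hg' hz)
    ((integrable_aux ha hgc hg hz).const_mul z), integral_const_mul, sub_eq_zero] at this
  exact this.symm

lemma abs_neg_ofReal_pow (t : ℝ) (n : ℕ) : ‖(-(t:ℂ)) ^ n‖ = |t| ^ n := by
  rw [norm_pow, norm_neg, Complex.norm_real, Real.norm_eq_abs]

lemma pow_weight_le (t : ℝ) {p q : ℕ} (hpq : p ≤ q) : (1 + |t|) ^ p ≤ (1 + |t|) ^ q :=
  pow_le_pow_right₀ (by linarith [abs_nonneg t]) hpq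

lemma pt_bound {a : ℝ} {u : ℝ → ℂ} {M : ℝ} {n m : ℕ} (hnm : n ≤ m)
    (h : ∀ t : ℝ, (1 + |t|) ^ (m + 2) * Real.cosh (a * t) * ‖u t‖ ≤ M) (t : ℝ) :
    (1 + |t|) ^ 2 * Real.cosh (a * t) * ‖(-(t:ℂ)) ^ n * u t‖ ≤ M := by
  have h1 : ‖(-(t:ℂ)) ^ n * u t‖ = |t| ^ n * ‖u t‖ := by
    rw [norm_mul, abs_neg_ofReal_pow]
  have h2 : (1 + |t|) ^ 2 * |t| ^ n ≤ (1 + |t|) ^ (m + 2) := by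
    calc (1 + |t|) ^ 2 * |t| ^ n ≤ (1 + |t|) ^ 2 * (1 + |t|) ^ n := by gcongr <;> linarith [abs_nonneg t]
    _ = (1 + |t|) ^ (2 + n) := (pow_add _ _ _).symm
    _ ≤ (1 + |t|) ^ (m + 2) := pow_weight_le t (by omega)
  calc (1 + |t|) ^ 2 * Real.cosh (a * t) * ‖(-(t:ℂ)) ^ n * u t‖
      = ((1 + |t|) ^ 2 * |t| ^ n) * (Real.cosh (a * t) * ‖u t‖) := by
        rw [h1]; ring
    _ ≤ (1 + |t|) ^ (m + 2) * (Real.cosh (a * t) * ‖u t‖) := by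
        gcongr
    _ = (1 + |t|) ^ (m + 2) * Real.cosh (a * t) * ‖u t‖ := by ring
    _ ≤ M := h t

lemma wbdd_pow_bound {a : ℝ} {f : ℝ → ℂ} (hW : WSchwartzBdd a f) (n j : ℕ) :
    ∃ C : ℝ, ∀ t : ℝ,
      (1 + |t|) ^ 2 * Real.cosh (a * t) * ‖(-(t:ℂ)) ^ n * iteratedDeriv j f t‖ ≤ C := by
  obtain ⟨C, hC⟩ := hW (n + 2) j
  exact ⟨C, fun t => pt_bound le_rfl (fun t => hC t) t⟩

lemma wbdd_deriv {a : ℝ} {f : ℝ → ℂ} (hW : WSchwartzBdd a f) : WSchwartzBdd a (deriv f) := by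
  intro N k
  obtain ⟨C, hC⟩ := hW N (k + 1)
  refine ⟨C, fun t => ?_⟩
  rw [← iteratedDeriv_succ']
  exact hC t

lemma contDiff_deriv {f : ℝ → ℂ} (hf : ContDiff ℝ (⊤ : ℕ∞) f) : ContDiff ℝ (⊤ : ℕ∞) (deriv f) :=
  (contDiff_infty_iff_deriv.mp hf).2

lemma hasDerivAt_gm {f : ℝ → ℂ} (hf : ContDiff ℝ (⊤ : ℕ∞) f) (m : ℕ) (t : ℝ) :
    HasDerivAt (fun t : ℝ => (-(t:ℂ)) ^ m * f t)
      (-(m:ℂ) * (-(t:ℂ)) ^ (m - 1) * f t + (-(t:ℂ)) ^ m * deriv f t) t := by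
  have h0 : HasDerivAt (fun t : ℝ => (t:ℂ)) 1 t := by
    exact ((Complex.ofRealCLM : ℝ →L[ℝ] ℂ).hasDerivAt (x := t)).congr_deriv (by simp)
  have h1 : HasDerivAt (fun t : ℝ => (-(t:ℂ))) (-1) t := h0.neg
  have h2 : HasDerivAt (fun t : ℝ => (-(t:ℂ)) ^ m) ((m:ℂ) * (-(t:ℂ)) ^ (m - 1) * (-1)) t :=
    (hasDerivAt_pow m (-(t:ℂ))).comp t h1
  have h3 := (hf.differentiable (by norm_num) t).hasDerivAt
  exact (h2.mul h3).congr_deriv (by ring)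

lemma cont_gm {f : ℝ → ℂ} (hf : Continuous f) (m : ℕ) :
    Continuous fun t : ℝ => (-(t:ℂ)) ^ m * f t := by fun_prop

lemma claim {a : ℝ} (ha : 0 < a) :
    ∀ k m : ℕ, ∀ f : ℝ → ℂ, ContDiff ℝ (⊤ : ℕ∞) f → WSchwartzBdd a f →
    ∀ M : ℝ,
    (∀ i ≤ k, ∀ t : ℝ,
      (1 + |t|) ^ (m + 2) * Real.cosh (a * t) * ‖iteratedDeriv i f t‖ ≤ M) →
    ∀ z : ℂ, |z.re| ≤ a →
      ‖z‖ ^ k *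
        ‖∫ t : ℝ, (-(t:ℂ)) ^ m * f t * Complex.exp (-(z * t))‖
        ≤ 8 * ((m:ℝ) + 1) ^ k * M := by
  intro k
  induction k with
  | zero =>
    intro m f hf hW M hM z hz
    have hb : ∀ t : ℝ, (1 + |t|) ^ 2 * Real.cosh (a * t) *
        ‖(-(t:ℂ)) ^ m * f t‖ ≤ M := by
      intro t
      have := hM 0 le_rfl
      simp only [iteratedDeriv_zero] at this
      exact pt_bound le_rfl this t
    have := norm_integral_le_aux ha (cont_gm hf.continuous m) hb hz
    simpa using this
  | succ k IH =>
    intro m f hf hW M hM z hz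
    have hM0 : 0 ≤ M := le_trans (by positivity) (hM 0 (by omega) 0)
    have hfc : Continuous f := hf.continuous
    have hfc' : Continuous (deriv f) := (contDiff_deriv hf).continuous
    -- qualitative bounds
    obtain ⟨C0, hC0⟩ := wbdd_pow_bound hW m 0
    obtain ⟨C1, hC1⟩ := wbdd_pow_bound hW (m - 1) 0
    obtain ⟨C2, hC2⟩ := wbdd_pow_bound hW m 1
    simp only [iteratedDeriv_zero, iteratedDeriv_one] at hC0 hC1 hC2
    set g' : ℝ → ℂ := fun t => -(m:ℂ) * (-(t:ℂ)) ^ (m - 1) * f t + (-(t:ℂ)) ^ m * deriv f t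
      with hg'def
    have hg'c : Continuous g' := by
      apply Continuous.add
      · fun_prop
      · exact cont_gm hfc' m
    have hg'b : ∀ t : ℝ, (1 + |t|) ^ 2 * Real.cosh (a * t) * ‖g' t‖
        ≤ (m:ℝ) * C1 + C2 := by
      intro t
      set P := (1 + |t|) ^ 2 * Real.cosh (a * t) with hP
      have hPpos : 0 < P := by positivity
      have tri : ‖g' t‖ ≤
          (m:ℝ) * ‖(-(t:ℂ)) ^ (m - 1) * f t‖
            + ‖(-(t:ℂ)) ^ m * deriv f t‖ := by
        calc ‖g' t‖
            ≤ ‖-(m:ℂ) * (-(t:ℂ)) ^ (m - 1) * f t‖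
              + ‖(-(t:ℂ)) ^ m * deriv f t‖ := norm_add_le _ _
        _ = (m:ℝ) * ‖(-(t:ℂ)) ^ (m - 1) * f t‖
              + ‖(-(t:ℂ)) ^ m * deriv f t‖ := by
            rw [mul_assoc, norm_mul, norm_neg, Complex.norm_natCast]
      have e1 := hC1 t
      have e2 := hC2 t
      rw [← hP] at e1 e2
      calc P * ‖g' t‖
          ≤ P * ((m:ℝ) * ‖(-(t:ℂ)) ^ (m - 1) * f t‖
            + ‖(-(t:ℂ)) ^ m * deriv f t‖) :=
          mul_le_mul_of_nonneg_left tri hPpos.le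
        _ = (m:ℝ) * (P * ‖(-(t:ℂ)) ^ (m - 1) * f t‖)
            + P * ‖(-(t:ℂ)) ^ m * deriv f t‖ := by ring
        _ ≤ (m:ℝ) * C1 + C2 := by
            have h1 : (m:ℝ) * (P * ‖(-(t:ℂ)) ^ (m - 1) * f t‖) ≤ (m:ℝ) * C1 :=
              mul_le_mul_of_nonneg_left e1 (Nat.cast_nonneg m)
            linarith
    -- integration by parts
    have hIBP : z * ∫ t : ℝ, (-(t:ℂ)) ^ m * f t * Complex.exp (-(z * t))
        = ∫ t : ℝ, g' t * Complex.exp (-(z * t)) :=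
      ibp_aux ha (cont_gm hfc m) (fun t => hasDerivAt_gm hf m t) hg'c hC0 hg'b hz
    -- split
    have hint1 : Integrable (fun t : ℝ => ((-(t:ℂ)) ^ (m - 1) * f t) * Complex.exp (-(z * t))) :=
      integrable_aux ha (cont_gm hfc (m - 1)) hC1 hz
    have hint2 : Integrable (fun t : ℝ => ((-(t:ℂ)) ^ m * deriv f t) * Complex.exp (-(z * t))) :=
      integrable_aux ha (cont_gm hfc' m) hC2 hz
    have hsplit : ∫ t : ℝ, g' t * Complex.exp (-(z * t))
        = -(m:ℂ) * (∫ t : ℝ, (-(t:ℂ)) ^ (m - 1) * f t * Complex.exp (-(z * t)))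
          + ∫ t : ℝ, (-(t:ℂ)) ^ m * deriv f t * Complex.exp (-(z * t)) := by
      have hrw : (fun t : ℝ => g' t * Complex.exp (-(z * t)))
          = fun t : ℝ => -(m:ℂ) * (((-(t:ℂ)) ^ (m - 1) * f t) * Complex.exp (-(z * t)))
            + ((-(t:ℂ)) ^ m * deriv f t) * Complex.exp (-(z * t)) := by
        funext t; simp only [hg'def]; ring
      rw [hrw, integral_add (hint1.const_mul _) hint2, integral_const_mul]
    -- IH applications
    have ih1 : ‖z‖ ^ k *
        ‖∫ t : ℝ, (-(t:ℂ)) ^ (m - 1) * f t * Complex.exp (-(z * t))‖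
        ≤ 8 * (((m - 1 : ℕ):ℝ) + 1) ^ k * M := by
      apply IH (m - 1) f hf hW M _ z hz
      intro i hi t
      have h1 := hM i (by omega) t
      have h2 : (1 + |t|) ^ (m - 1 + 2) * (Real.cosh (a * t) * ‖iteratedDeriv i f t‖)
          ≤ (1 + |t|) ^ (m + 2) * (Real.cosh (a * t) * ‖iteratedDeriv i f t‖) :=
        mul_le_mul_of_nonneg_right (pow_weight_le t (by omega)) (by positivity)
      calc (1 + |t|) ^ (m - 1 + 2) * Real.cosh (a * t) * ‖iteratedDeriv i f t‖
          = (1 + |t|) ^ (m - 1 + 2) * (Real.cosh (a * t) * ‖iteratedDeriv i f t‖) := by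
            ring
        _ ≤ (1 + |t|) ^ (m + 2) * (Real.cosh (a * t) * ‖iteratedDeriv i f t‖) := h2
        _ = (1 + |t|) ^ (m + 2) * Real.cosh (a * t) * ‖iteratedDeriv i f t‖ := by ring
        _ ≤ M := h1
    have ih2 : ‖z‖ ^ k *
        ‖∫ t : ℝ, (-(t:ℂ)) ^ m * deriv f t * Complex.exp (-(z * t))‖
        ≤ 8 * ((m:ℝ) + 1) ^ k * M := by
      apply IH m (deriv f) (contDiff_deriv hf) (wbdd_deriv hW) M _ z hz
      intro i hi t
      rw [← iteratedDeriv_succ']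
      exact hM (i + 1) (by omega) t
    -- combine
    have tri2 : ‖∫ t : ℝ, g' t * Complex.exp (-(z * t))‖
        ≤ (m:ℝ) * ‖∫ t : ℝ, (-(t:ℂ)) ^ (m - 1) * f t * Complex.exp (-(z * t))‖
          + ‖∫ t : ℝ, (-(t:ℂ)) ^ m * deriv f t * Complex.exp (-(z * t))‖ := by
      rw [hsplit]
      calc ‖-(m:ℂ) * (∫ t : ℝ, (-(t:ℂ)) ^ (m - 1) * f t * Complex.exp (-(z * t)))
            + ∫ t : ℝ, (-(t:ℂ)) ^ m * deriv f t * Complex.exp (-(z * t))‖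
          ≤ ‖-(m:ℂ) * ∫ t : ℝ, (-(t:ℂ)) ^ (m - 1) * f t * Complex.exp (-(z * t))‖
            + ‖∫ t : ℝ, (-(t:ℂ)) ^ m * deriv f t * Complex.exp (-(z * t))‖ :=
          norm_add_le _ _
        _ = _ := by rw [norm_mul, norm_neg, Complex.norm_natCast]
    have key : ‖z‖ ^ (k + 1) *
        ‖∫ t : ℝ, (-(t:ℂ)) ^ m * f t * Complex.exp (-(z * t))‖
        = ‖z‖ ^ k * ‖∫ t : ℝ, g' t * Complex.exp (-(z * t))‖ := by
      rw [← hIBP, norm_mul, pow_succ]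
      ring
    have hcast : (((m - 1 : ℕ):ℝ) + 1) ^ k ≤ ((m:ℝ) + 1) ^ k := by
      apply pow_le_pow_left₀ (by positivity)
      have : ((m - 1 : ℕ):ℝ) ≤ (m:ℝ) := by exact_mod_cast Nat.sub_le m 1
      linarith
    have habsz : (0:ℝ) ≤ ‖z‖ ^ k := by positivity
    calc ‖z‖ ^ (k + 1) *
          ‖∫ t : ℝ, (-(t:ℂ)) ^ m * f t * Complex.exp (-(z * t))‖
        = ‖z‖ ^ k * ‖∫ t : ℝ, g' t * Complex.exp (-(z * t))‖ := key
      _ ≤ ‖z‖ ^ k *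
          ((m:ℝ) * ‖∫ t : ℝ, (-(t:ℂ)) ^ (m - 1) * f t * Complex.exp (-(z * t))‖
            + ‖∫ t : ℝ, (-(t:ℂ)) ^ m * deriv f t * Complex.exp (-(z * t))‖) :=
          mul_le_mul_of_nonneg_left tri2 habsz
      _ = (m:ℝ) * (‖z‖ ^ k *
            ‖∫ t : ℝ, (-(t:ℂ)) ^ (m - 1) * f t * Complex.exp (-(z * t))‖)
          + ‖z‖ ^ k *
            ‖∫ t : ℝ, (-(t:ℂ)) ^ m * deriv f t * Complex.exp (-(z * t))‖ := by ring
      _ ≤ (m:ℝ) * (8 * (((m - 1 : ℕ):ℝ) + 1) ^ k * M) + 8 * ((m:ℝ) + 1) ^ k * M := by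
          have := mul_le_mul_of_nonneg_left ih1 (Nat.cast_nonneg m : (0:ℝ) ≤ m)
          linarith
      _ ≤ (m:ℝ) * (8 * ((m:ℝ) + 1) ^ k * M) + 8 * ((m:ℝ) + 1) ^ k * M := by
          have h8 : 8 * (((m - 1 : ℕ):ℝ) + 1) ^ k * M ≤ 8 * ((m:ℝ) + 1) ^ k * M := by
            nlinarith
          nlinarith [Nat.cast_nonneg (α := ℝ) m]
      _ = 8 * ((m:ℝ) + 1) ^ (k + 1) * M := by rw [pow_succ]; ring

lemma one_add_pow_le {x : ℝ} (hx : 0 ≤ x) (N : ℕ) : (1 + x) ^ N ≤ 2 ^ N * (1 + x ^ N) := by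
  rcases le_total x 1 with h | h
  · calc (1 + x) ^ N ≤ 2 ^ N := pow_le_pow_left₀ (by linarith) (by linarith) N
      _ ≤ 2 ^ N * (1 + x ^ N) := le_mul_of_one_le_right (by positivity)
          (by nlinarith [pow_nonneg hx N])
  · calc (1 + x) ^ N ≤ (2 * x) ^ N := pow_le_pow_left₀ (by linarith) (by linarith) N
      _ = 2 ^ N * x ^ N := mul_pow _ _ _
      _ ≤ 2 ^ N * (1 + x ^ N) := by nlinarith [pow_nonneg hx N, pow_pos (show (0:ℝ) < 2 by norm_num) N]

-- the derivative of G m is G (m+1) on the open strip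
lemma hasDerivAt_G {a : ℝ} (ha : 0 < a) {f : ℝ → ℂ} (hf : ContDiff ℝ (⊤ : ℕ∞) f)
    (hW : WSchwartzBdd a f) (m : ℕ) {z : ℂ} (hz : |z.re| < a) :
    HasDerivAt (fun z : ℂ => ∫ t : ℝ, (-(t:ℂ)) ^ m * f t * Complex.exp (-(z * t)))
      (∫ t : ℝ, (-(t:ℂ)) ^ (m + 1) * f t * Complex.exp (-(z * t))) z := by
  obtain ⟨C, hC⟩ := wbdd_pow_bound hW m 0
  obtain ⟨C', hC'⟩ := wbdd_pow_bound hW (m + 1) 0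
  simp only [iteratedDeriv_zero] at hC hC'
  have hC'' : ∀ t : ℝ, (1 + |t|) ^ 2 * Real.cosh (a * t) *
      ‖(-(t:ℂ)) * ((-(t:ℂ)) ^ m * f t)‖ ≤ C' := by
    intro t
    have := hC' t
    rw [show (-(t:ℂ)) * ((-(t:ℂ)) ^ m * f t) = (-(t:ℂ)) ^ (m + 1) * f t by ring]
    exact this
  have h := hasDerivAt_aux ha (cont_gm hf.continuous m) hC hC'' hz
  have heq : (∫ t : ℝ, (-(t:ℂ)) * ((-(t:ℂ)) ^ m * f t) * Complex.exp (-(z * t)))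
      = ∫ t : ℝ, (-(t:ℂ)) ^ (m + 1) * f t * Complex.exp (-(z * t)) := by
    congr 1
    funext t
    ring
  rw [heq] at h
  exact h

/-- **Continuity of the Fourier transform from `𝓢_a(ℝ)` into the strip-Schwartz space**
(part of Lemma 2.2.4 of the paper). For `f ∈ 𝓢_a(ℝ)`, `F z = ∫ f t e^{-zt} dt` converges
absolutely on the closed strip `|Re z| ≤ a`, is continuous there and holomorphic on the open
strip, its `m`-th derivative on the open strip is `z ↦ ∫ (-t)^m f t e^{-zt} dt` (which is
continuous on the closed strip), and for each `N, m` there is a constant `C`, depending only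
on `a, N, m`, bounding `(1+|z|)^N |F^{(m)}(z)|` by `C` times the maximum over `k ≤ N` of
`sup_t (1+|t|)^{m+2} cosh(at) |f^{(k)}(t)|`. -/
theorem stmt_3 (a : ℝ) (ha : 0 < a) :
    (∀ f : ℝ → ℂ, ContDiff ℝ (⊤ : ℕ∞) f → WSchwartzBdd a f →
      ∀ F : ℂ → ℂ, (∀ z : ℂ, F z = ∫ t : ℝ, f t * Complex.exp (-(z * (t : ℂ)))) →
      (∀ z : ℂ, |z.re| ≤ a →
        Integrable fun t : ℝ => f t * Complex.exp (-(z * (t : ℂ)))) ∧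
      ContinuousOn F {z : ℂ | |z.re| ≤ a} ∧
      DifferentiableOn ℂ F {z : ℂ | |z.re| < a} ∧
      (∀ m : ℕ,
        (∀ z : ℂ, |z.re| < a →
          iteratedDeriv m F z = ∫ t : ℝ, (-(t : ℂ)) ^ m * f t * Complex.exp (-(z * (t : ℂ)))) ∧
        ContinuousOn (fun z : ℂ => ∫ t : ℝ, (-(t : ℂ)) ^ m * f t * Complex.exp (-(z * (t : ℂ))))
          {z : ℂ | |z.re| ≤ a})) ∧
    (∀ N m : ℕ, ∃ C > (0 : ℝ), ∀ f : ℝ → ℂ, ContDiff ℝ (⊤ : ℕ∞) f → WSchwartzBdd a f →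
      ∀ M : ℝ,
      (∀ k ≤ N, ∀ t : ℝ,
        (1 + |t|) ^ (m + 2) * Real.cosh (a * t) * ‖iteratedDeriv k f t‖ ≤ M) →
      ∀ z : ℂ, |z.re| ≤ a →
        (1 + ‖z‖) ^ N *
          ‖∫ t : ℝ, (-(t : ℂ)) ^ m * f t * Complex.exp (-(z * (t : ℂ)))‖ ≤ C * M) := by
  have hopen : IsOpen {z : ℂ | |z.re| < a} := by
    have : {z : ℂ | |z.re| < a} = (fun z : ℂ => |z.re|) ⁻¹' (Set.Iio a) := rfl
    rw [this]
    exact (Complex.continuous_re.abs).isOpen_preimage _ isOpen_Iio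
  constructor
  · intro f hf hW F hF
    -- G m
    set G : ℕ → ℂ → ℂ :=
      fun m z => ∫ t : ℝ, (-(t:ℂ)) ^ m * f t * Complex.exp (-(z * t)) with hG
    have hbd : ∀ m : ℕ, ∃ C : ℝ, ∀ t : ℝ,
        (1 + |t|) ^ 2 * Real.cosh (a * t) * ‖(-(t:ℂ)) ^ m * f t‖ ≤ C := by
      intro m
      obtain ⟨C, hC⟩ := wbdd_pow_bound hW m 0
      simp only [iteratedDeriv_zero] at hC
      exact ⟨C, hC⟩
    have hFG : F = G 0 := by
      funext z
      rw [hF z, hG]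
      simp only [pow_zero, one_mul]
    have hint : ∀ z : ℂ, |z.re| ≤ a →
        Integrable fun t : ℝ => f t * Complex.exp (-(z * (t : ℂ))) := by
      intro z hz
      obtain ⟨C, hC⟩ := hbd 0
      simp only [pow_zero, one_mul] at hC
      exact integrable_aux ha hf.continuous hC hz
    refine ⟨hint, ?_, ?_, ?_⟩
    · rw [hFG]
      obtain ⟨C, hC⟩ := hbd 0
      exact continuousOn_aux ha (cont_gm hf.continuous 0) hC
    · rw [hFG]
      intro z hz
      exact (hasDerivAt_G ha hf hW 0 hz).differentiableAt.differentiableWithinAt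
    · intro m
      constructor
      · induction m with
        | zero =>
          intro z hz
          rw [iteratedDeriv_zero, hFG]
        | succ m IHm =>
          intro z hz
          rw [iteratedDeriv_succ]
          have hev : (iteratedDeriv m F) =ᶠ[nhds z] G m := by
            filter_upwards [hopen.mem_nhds hz] with w hw
            exact IHm w hw
          rw [hev.deriv_eq]
          exact (hasDerivAt_G ha hf hW m hz).deriv
      · obtain ⟨C, hC⟩ := hbd m
        exact continuousOn_aux ha (cont_gm hf.continuous m) hC
  · intro N m
    refine ⟨2 ^ N * (8 + 8 * ((m:ℝ) + 1) ^ N), by positivity, ?_⟩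
    intro f hf hW M hM z hz
    have hM0 : 0 ≤ M := le_trans (by positivity) (hM 0 (by omega) 0)
    have h0 : ‖∫ t : ℝ, (-(t:ℂ)) ^ m * f t * Complex.exp (-(z * t))‖
        ≤ 8 * M := by
      have := claim ha 0 m f hf hW M (fun i hi t => by
        interval_cases i
        exact hM 0 (by omega) t) z hz
      simpa using this
    have hN : ‖z‖ ^ N *
        ‖∫ t : ℝ, (-(t:ℂ)) ^ m * f t * Complex.exp (-(z * t))‖
        ≤ 8 * ((m:ℝ) + 1) ^ N * M :=
      claim ha N m f hf hW M (fun i hi t => hM i hi t) z hz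
    have habs : (0:ℝ) ≤ ‖∫ t : ℝ, (-(t:ℂ)) ^ m * f t * Complex.exp (-(z * t))‖ :=
      norm_nonneg _
    calc (1 + ‖z‖) ^ N *
          ‖∫ t : ℝ, (-(t:ℂ)) ^ m * f t * Complex.exp (-(z * t))‖
        ≤ (2 ^ N * (1 + ‖z‖ ^ N)) *
          ‖∫ t : ℝ, (-(t:ℂ)) ^ m * f t * Complex.exp (-(z * t))‖ :=
          mul_le_mul_of_nonneg_right (one_add_pow_le (norm_nonneg z) N) habs
      _ = 2 ^ N * (‖∫ t : ℝ, (-(t:ℂ)) ^ m * f t * Complex.exp (-(z * t))‖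
            + ‖z‖ ^ N *
              ‖∫ t : ℝ, (-(t:ℂ)) ^ m * f t * Complex.exp (-(z * t))‖) := by ring
      _ ≤ 2 ^ N * (8 * M + 8 * ((m:ℝ) + 1) ^ N * M) := by
          have h2 : (0:ℝ) ≤ 2 ^ N := by positivity
          apply mul_le_mul_of_nonneg_left _ h2
          linarith
      _ = 2 ^ N * (8 + 8 * ((m:ℝ) + 1) ^ N) * M := by ring
end

section
/- Let a > 0 and let F belong to the strip-Schwartz space 𝓢(S_a): F : S_a → ℂ is continuous on the closed strip S_a = {z ∈ ℂ : |Re z| ≤ a}, holomorphic on its interior S_a°, every complex derivative F^{(k)} extends continuously from S_a° to S_a, and sup_{z ∈ S_a} (1+|z|)^N |F^{(k)}(z)| < ∞ for all N, k ∈ ℕ. Define g(t) = (1/2π) ∫_ℝ F(iν) e^{iνt} dν. Then g is infinitely differentiable on ℝ, and for every N, m ∈ ℕ there is a constant C > 0, depending only on a, N, m, such that sup_{t ∈ ℝ} (1+|t|)^N cosh(a t) |g^{(m)}(t)| ≤ C · max_{j ≤ N} sup_{z ∈ S_a} (1+|z|)^{m+2} |F^{(j)}(z)|. In particular g ∈ 𝓢_a(ℝ).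 -/
open MeasureTheory Complex Filter Topology Metric

/-- The closed strip `S_a = {z : |Re z| ≤ a}`. -/
def Strip (a : ℝ) : Set ℂ := {z : ℂ | |z.re| ≤ a}

/-- The open strip `S_a° = {z : |Re z| < a}`. -/
def StripO (a : ℝ) : Set ℂ := {z : ℂ | |z.re| < a}

namespace SS4

lemma isOpen_stripO (a : ℝ) : IsOpen (StripO a) :=
  isOpen_lt (continuous_abs.comp Complex.continuous_re) continuous_const

lemma stripO_subset (a : ℝ) : StripO a ⊆ Strip a := fun z hz => le_of_lt (show |z.re| < a from hz)

lemma mem_stripO {a σ : ℝ} (h : |σ| < a) (ν : ℝ) : (σ : ℂ) + ν * I ∈ StripO a := by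
  simp [StripO, h]

lemma one_add_sq_le {σ ν : ℝ} : 1 + ν ^ 2 ≤ (1 + ‖(σ:ℂ) + ν * I‖) ^ 2 := by
  have h1 : |ν| ≤ ‖(σ:ℂ) + ν * I‖ := by
    simpa using Complex.abs_im_le_norm ((σ:ℂ) + ν * I)
  have h0 : (0:ℝ) ≤ |ν| := abs_nonneg ν
  nlinarith [_root_.sq_abs ν]

lemma iteratedDeriv_pow (m : ℕ) : ∀ j : ℕ,
    iteratedDeriv j (fun z : ℂ => z ^ m) = fun z => (m.descFactorial j : ℂ) * z ^ (m - j) := by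
  intro j
  induction j with
  | zero => simp
  | succ j ih =>
    rw [iteratedDeriv_succ, ih]
    funext z
    rw [deriv_const_mul _ (differentiableAt_pow _), deriv_pow_field, Nat.descFactorial_succ]
    have h : m - (j+1) = m - j - 1 := (Nat.sub_sub m j 1).symm
    push_cast
    rw [h]
    ring


end SS4

/-- Membership in the strip-Schwartz space `𝓢(S_a)`: `F` is continuous on the closed strip,
holomorphic on the open strip, `Fd k` is the continuous extension to the closed strip of the
`k`-th complex derivative of `F` (so `Fd 0 = F` on `S_a` and `Fd k = F^{(k)}` on `S_a°`),
and all seminorms `sup_{z ∈ S_a} (1+|z|)^N |Fd k z|` are finite. -/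
def StripSchwartz (a : ℝ) (F : ℂ → ℂ) (Fd : ℕ → ℂ → ℂ) : Prop :=
  ContinuousOn F (Strip a) ∧
  DifferentiableOn ℂ F (StripO a) ∧
  (∀ z ∈ Strip a, Fd 0 z = F z) ∧
  (∀ k : ℕ, ∀ z ∈ StripO a, Fd k z = iteratedDeriv k F z) ∧
  (∀ k : ℕ, ContinuousOn (Fd k) (Strip a)) ∧
  (∀ N k : ℕ, ∃ C : ℝ, ∀ z ∈ Strip a,
    (1 + ‖z‖) ^ N * ‖Fd k z‖ ≤ C)

namespace SS4

section Main
variable {a : ℝ} {F : ℂ → ℂ} {Fd : ℕ → ℂ → ℂ}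

lemma analyticG (hF : StripSchwartz a F Fd) (m k : ℕ) :
    AnalyticOnNhd ℂ (deriv^[k] (fun w : ℂ => w ^ m * F w)) (StripO a) := by
  have hFan : AnalyticOnNhd ℂ F (StripO a) := hF.2.1.analyticOnNhd (isOpen_stripO a)
  have hG : AnalyticOnNhd ℂ (fun w : ℂ => w ^ m * F w) (StripO a) :=
    (analyticOnNhd_id.pow m).mul hFan
  exact hG.iterated_deriv k

lemma norm_iter_deriv_G_le (hF : StripSchwartz a F Fd) {m N k : ℕ} (hk : k ≤ N) {M : ℝ}
    (hM : ∀ j ≤ N, ∀ z ∈ Strip a, (1 + ‖z‖) ^ (m + 2) * ‖Fd j z‖ ≤ M)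
    {z : ℂ} (hz : z ∈ StripO a) :
    ‖deriv^[k] (fun w : ℂ => w ^ m * F w) z‖ ≤
      (2 ^ N * (m + 1) ^ N) * M * ((1 + ‖z‖) ^ 2)⁻¹ := by
  obtain ⟨h1, h2, h3, h4, h5, h6⟩ := hF
  have hopen := isOpen_stripO a
  have habs : (0:ℝ) < 1 + ‖z‖ := by positivity
  have hFan : AnalyticOnNhd ℂ F (StripO a) := h2.analyticOnNhd hopen
  have hcF : ContDiffOn ℂ (⊤ : WithTop ℕ∞) F (StripO a) :=
    hFan.contDiffOn hopen.uniqueDiffOn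
  have hcP : ContDiffOn ℂ (⊤ : WithTop ℕ∞) (fun w : ℂ => w ^ m) (StripO a) :=
    (contDiff_id.pow m).contDiffOn
  rw [← iteratedDeriv_eq_iterate, ← norm_iteratedFDeriv_eq_norm_iteratedDeriv,
    ← iteratedFDerivWithin_of_isOpen k hopen hz]
  refine le_trans (norm_iteratedFDerivWithin_mul_le hcP hcF hopen.uniqueDiffOn hz le_top) ?_
  have key : ∀ i ∈ Finset.range (k + 1),
      (k.choose i : ℝ) * ‖iteratedFDerivWithin ℂ i (fun w : ℂ => w ^ m) (StripO a) z‖ *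
        ‖iteratedFDerivWithin ℂ (k - i) F (StripO a) z‖ ≤
      (k.choose i : ℝ) * ((m + 1) ^ N * M * ((1 + ‖z‖) ^ 2)⁻¹) := by
    intro i hi
    have hik : i ≤ k := Nat.lt_succ_iff.mp (Finset.mem_range.mp hi)
    have hpowb : ‖iteratedFDerivWithin ℂ i (fun w : ℂ => w ^ m) (StripO a) z‖ ≤
        ((m + 1 : ℝ)) ^ N * (1 + ‖z‖) ^ m := by
      rw [iteratedFDerivWithin_of_isOpen i hopen hz,
        norm_iteratedFDeriv_eq_norm_iteratedDeriv, iteratedDeriv_pow]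
      have h1' : ‖(m.descFactorial i : ℂ) * z ^ (m - i)‖
          = (m.descFactorial i : ℝ) * ‖z‖ ^ (m - i) := by
        simp [norm_mul, norm_pow]
      rw [h1']
      have hd : (m.descFactorial i : ℝ) ≤ (m + 1 : ℝ) ^ N := by
        calc (m.descFactorial i : ℝ) ≤ ((m ^ i : ℕ) : ℝ) := by
              exact_mod_cast Nat.descFactorial_le_pow m i
          _ ≤ ((m + 1 : ℕ) : ℝ) ^ N := by
              push_cast
              calc (m : ℝ) ^ i ≤ (m + 1 : ℝ) ^ i :=
                    pow_le_pow_left₀ (by positivity) (by linarith) i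
                _ ≤ (m + 1 : ℝ) ^ N :=
                    pow_le_pow_right₀ (by linarith) (le_trans hik hk)
          _ = (m + 1 : ℝ) ^ N := by push_cast; ring
      have hzp : ‖z‖ ^ (m - i) ≤ (1 + ‖z‖) ^ m := by
        calc ‖z‖ ^ (m - i) ≤ (1 + ‖z‖) ^ (m - i) :=
              pow_le_pow_left₀ (norm_nonneg z) (by linarith) _
          _ ≤ (1 + ‖z‖) ^ m := pow_le_pow_right₀ (by linarith [norm_nonneg z]) (Nat.sub_le m i)
      exact mul_le_mul hd hzp (by positivity) (by positivity)
    have hFb : ‖iteratedFDerivWithin ℂ (k - i) F (StripO a) z‖ ≤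
        M * ((1 + ‖z‖) ^ (m + 2))⁻¹ := by
      rw [iteratedFDerivWithin_of_isOpen (k - i) hopen hz,
        norm_iteratedFDeriv_eq_norm_iteratedDeriv,
        ← h4 (k - i) z hz]
      have hMz := hM (k - i) (le_trans (Nat.sub_le k i) hk) z (stripO_subset a hz)
      have hP : (0:ℝ) < (1 + ‖z‖) ^ (m + 2) := by positivity
      rw [← div_eq_mul_inv]
      rw [le_div_iff₀ hP, mul_comm]
      exact hMz
    calc (k.choose i : ℝ) * ‖iteratedFDerivWithin ℂ i (fun w : ℂ => w ^ m) (StripO a) z‖ *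
          ‖iteratedFDerivWithin ℂ (k - i) F (StripO a) z‖
        ≤ (k.choose i : ℝ) * ((m + 1 : ℝ) ^ N * (1 + ‖z‖) ^ m) *
          (M * ((1 + ‖z‖) ^ (m + 2))⁻¹) := by
          have hM0 : (0:ℝ) ≤ M :=
            le_trans (by positivity) (hM 0 (Nat.zero_le N) z (stripO_subset a hz))
          apply mul_le_mul _ hFb (norm_nonneg _) (by positivity)
          exact mul_le_mul_of_nonneg_left hpowb (by positivity)
      _ = (k.choose i : ℝ) * ((m + 1) ^ N * M * ((1 + ‖z‖) ^ 2)⁻¹) := by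
          rw [pow_add]
          field_simp
  refine le_trans (Finset.sum_le_sum key) ?_
  rw [← Finset.sum_mul]
  have : (∑ i ∈ Finset.range (k + 1), (k.choose i : ℝ)) = 2 ^ k := by
    exact_mod_cast Nat.sum_range_choose k
  rw [this]
  have hM0 : (0:ℝ) ≤ M :=
    le_trans (by positivity) (hM 0 (Nat.zero_le N) z (stripO_subset a hz))
  have h2k : (2:ℝ) ^ k ≤ 2 ^ N := pow_le_pow_right₀ (by norm_num) hk
  calc (2:ℝ) ^ k * ((m + 1) ^ N * M * ((1 + ‖z‖) ^ 2)⁻¹)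
      ≤ (2:ℝ) ^ N * ((m + 1) ^ N * M * ((1 + ‖z‖) ^ 2)⁻¹) := by
        apply mul_le_mul_of_nonneg_right h2k (by positivity)
    _ = (2 ^ N * (m + 1) ^ N) * M * ((1 + ‖z‖) ^ 2)⁻¹ := by ring


lemma hasDerivAt_cexp_mul (c : ℂ) (t : ℝ) :
    HasDerivAt (fun s : ℝ => Complex.exp (c * s)) (c * Complex.exp (c * t)) t := by
  have h : HasDerivAt (fun w : ℂ => Complex.exp (c * w)) (c * Complex.exp (c * t)) (t : ℂ) := by
    simpa [mul_comm] using ((hasDerivAt_id (t:ℂ)).const_mul c).cexp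
  exact h.comp_ofReal

lemma hasDerivAt_line_nu (φ : ℂ → ℂ) (σ ν : ℝ) (h : DifferentiableAt ℂ φ ((σ:ℂ) + ↑ν * I)) :
    HasDerivAt (fun ν : ℝ => φ ((σ:ℂ) + ↑ν * I)) (I * deriv φ ((σ:ℂ) + ↑ν * I)) ν := by
  have h1 : HasDerivAt (fun w : ℂ => (σ:ℂ) + w * I) I ((ν:ℝ) : ℂ) := by
    simpa using ((hasDerivAt_id ((ν:ℂ))).mul_const I).const_add (σ:ℂ)
  have h2 := (h.hasDerivAt.comp ((ν:ℝ) : ℂ) h1)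
  have h3 := h2.comp_ofReal
  simpa [Function.comp, mul_comm] using h3

lemma hasDerivAt_line_sigma (φ : ℂ → ℂ) (σ ν : ℝ) (h : DifferentiableAt ℂ φ ((σ:ℂ) + ↑ν * I)) :
    HasDerivAt (fun σ : ℝ => φ ((σ:ℂ) + ↑ν * I)) (deriv φ ((σ:ℂ) + ↑ν * I)) σ := by
  have h1 : HasDerivAt (fun w : ℂ => w + (ν:ℂ) * I) 1 ((σ:ℝ) : ℂ) := by
    simpa using (hasDerivAt_id ((σ:ℂ))).add_const ((ν:ℂ) * I)
  have h2 := (h.hasDerivAt.comp ((σ:ℝ) : ℂ) h1)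
  have h3 := h2.comp_ofReal
  simpa [Function.comp] using h3

lemma integrable_of_bound {φ : ℝ → ℂ} (hc : Continuous φ) {c : ℝ}
    (hb : ∀ ν : ℝ, ‖φ ν‖ ≤ c * ((1:ℝ) + ν ^ 2)⁻¹) : Integrable φ :=
  (integrable_inv_one_add_sq.const_mul c).mono' hc.aestronglyMeasurable (ae_of_all _ hb)

lemma tendsto_zero_of_bound {φ : ℝ → ℂ} {c : ℝ}
    (hb : ∀ ν : ℝ, ‖φ ν‖ ≤ c * ((1:ℝ) + ν ^ 2)⁻¹) :
    Tendsto φ atTop (𝓝 0) ∧ Tendsto φ atBot (𝓝 0) := by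
  have hg : Tendsto (fun r : ℝ => c * ((1:ℝ) + r ^ 2)⁻¹) atTop (𝓝 0) := by
    have h1 : Tendsto (fun r : ℝ => (1:ℝ) + r ^ 2) atTop atTop :=
      tendsto_atTop_add_const_left _ 1 (tendsto_pow_atTop (two_ne_zero))
    simpa using (h1.inv_tendsto_atTop).const_mul c
  constructor
  · exact squeeze_zero_norm hb hg
  · have habs : Tendsto (fun ν : ℝ => |ν|) atBot atTop := tendsto_abs_atBot_atTop
    have hb' : ∀ ν : ℝ, ‖φ ν‖ ≤ c * ((1:ℝ) + |ν| ^ 2)⁻¹ := by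
      intro ν; rw [_root_.sq_abs]; exact hb ν
    exact squeeze_zero_norm hb' (hg.comp habs)

lemma integral_deriv_eq_zero {w w' : ℝ → ℂ} (hw : ∀ x, HasDerivAt w (w' x) x)
    (hi : Integrable w') (ht : Tendsto w atTop (𝓝 0)) (hb : Tendsto w atBot (𝓝 0)) :
    ∫ x : ℝ, w' x = 0 := by
  have h1 : ∫ x in Set.Iic (0:ℝ), w' x = w 0 - 0 :=
    integral_Iic_of_hasDerivAt_of_tendsto' (fun x _ => hw x) hi.integrableOn hb
  have h2 : ∫ x in Set.Ioi (0:ℝ), w' x = 0 - w 0 :=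
    integral_Ioi_of_hasDerivAt_of_tendsto' (fun x _ => hw x) hi.integrableOn ht
  rw [← intervalIntegral.integral_Iic_add_Ioi hi.integrableOn hi.integrableOn, h1, h2]
  ring

lemma norm_integral_le_pi {φ : ℝ → ℂ} {c : ℝ}
    (hb : ∀ ν : ℝ, ‖φ ν‖ ≤ c * ((1:ℝ) + ν ^ 2)⁻¹) :
    ‖∫ ν : ℝ, φ ν‖ ≤ c * Real.pi := by
  refine le_trans (norm_integral_le_of_norm_le (integrable_inv_one_add_sq.const_mul c)
    (ae_of_all _ hb)) ?_
  rw [MeasureTheory.integral_const_mul, integral_univ_inv_one_add_sq]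


lemma exists_M (hF : StripSchwartz a F Fd) (N n : ℕ) :
    ∃ M : ℝ, ∀ j ≤ N, ∀ z ∈ Strip a, (1 + ‖z‖) ^ n * ‖Fd j z‖ ≤ M := by
  induction N with
  | zero =>
    obtain ⟨C, hC⟩ := hF.2.2.2.2.2 n 0
    exact ⟨C, fun j hj z hz => by simpa [Nat.le_zero.mp hj] using hC z hz⟩
  | succ N ih =>
    obtain ⟨M, hM⟩ := ih
    obtain ⟨C, hC⟩ := hF.2.2.2.2.2 n (N + 1)
    refine ⟨max M C, fun j hj z hz => ?_⟩
    by_cases hje : j = N + 1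
    · subst hje; exact le_trans (hC z hz) (le_max_right M C)
    · exact le_trans (hM j (Nat.lt_succ_iff.mp (lt_of_le_of_ne hj hje)) z hz) (le_max_left M C)

/-- The function `z ↦ z^m F z`. -/
def Gm (F : ℂ → ℂ) (m : ℕ) : ℂ → ℂ := fun w => w ^ m * F w

lemma cont_integrand (hF : StripSchwartz a F Fd) {σ : ℝ} (hσ : |σ| < a) (m k : ℕ) (t : ℝ) :
    Continuous (fun ν : ℝ => deriv^[k] (Gm F m) ((σ:ℂ) + ↑ν * I) * Complex.exp (I * ↑ν * ↑t)) := by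
  have han := analyticG hF m k
  have hline : Continuous (fun ν : ℝ => (σ:ℂ) + ↑ν * I) := by continuity
  have hc1 : Continuous (fun ν : ℝ => deriv^[k] (Gm F m) ((σ:ℂ) + ↑ν * I)) :=
    han.continuousOn.comp_continuous hline (fun ν => mem_stripO hσ ν)
  exact hc1.mul (Complex.continuous_exp.comp (by continuity))

lemma bound_integrand (hF : StripSchwartz a F Fd) {m N k : ℕ} (hk : k ≤ N) {M : ℝ}
    (hM : ∀ j ≤ N, ∀ z ∈ Strip a, (1 + ‖z‖) ^ (m + 2) * ‖Fd j z‖ ≤ M)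
    {σ : ℝ} (hσ : |σ| < a) (t : ℝ) (ν : ℝ) :
    ‖deriv^[k] (Gm F m) ((σ:ℂ) + ↑ν * I) * Complex.exp (I * ↑ν * ↑t)‖ ≤
      (2 ^ N * (m + 1) ^ N * M) * ((1:ℝ) + ν ^ 2)⁻¹ := by
  have hz := mem_stripO hσ ν
  have hM0 : (0:ℝ) ≤ M :=
    le_trans (by positivity) (hM 0 (Nat.zero_le N) _ (stripO_subset a hz))
  have h1 := norm_iter_deriv_G_le hF hk hM hz
  have habs1 : ‖Complex.exp (I * ↑ν * ↑t)‖ = 1 := by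
    have he : I * (ν:ℂ) * (t:ℂ) = ((ν * t : ℝ) : ℂ) * I := by push_cast; ring
    rw [he, Complex.norm_exp_ofReal_mul_I]
  rw [norm_mul, habs1, mul_one]
  refine le_trans h1 ?_
  have h2 : ((1 + ‖(σ:ℂ) + ↑ν * I‖) ^ 2)⁻¹ ≤ ((1:ℝ) + ν ^ 2)⁻¹ :=
    inv_anti₀ (by positivity) one_add_sq_le
  exact mul_le_mul_of_nonneg_left h2 (by positivity)

lemma parts_one (hF : StripSchwartz a F Fd) (m k : ℕ) {σ : ℝ} (hσ : |σ| < a) (t : ℝ) :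
    (t:ℂ) * ∫ ν : ℝ, deriv^[k] (Gm F m) ((σ:ℂ) + ↑ν * I) * Complex.exp (I * ↑ν * ↑t)
      = - ∫ ν : ℝ, deriv^[k+1] (Gm F m) ((σ:ℂ) + ↑ν * I) * Complex.exp (I * ↑ν * ↑t) := by
  obtain ⟨M, hM⟩ := exists_M hF (k + 1) (m + 2)
  have hw : ∀ ν : ℝ, HasDerivAt
      (fun ν : ℝ => deriv^[k] (Gm F m) ((σ:ℂ) + ↑ν * I) * Complex.exp (I * ↑ν * ↑t))
      (I * deriv^[k+1] (Gm F m) ((σ:ℂ) + ↑ν * I) * Complex.exp (I * ↑ν * ↑t)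
        + (I * ↑t) * (deriv^[k] (Gm F m) ((σ:ℂ) + ↑ν * I) * Complex.exp (I * ↑ν * ↑t))) ν := by
    intro ν
    have hd1 : HasDerivAt (fun ν : ℝ => deriv^[k] (Gm F m) ((σ:ℂ) + ↑ν * I))
        (I * deriv^[k+1] (Gm F m) ((σ:ℂ) + ↑ν * I)) ν := by
      have hdiff := ((analyticG hF m k) _ (mem_stripO hσ ν)).differentiableAt
      have h := hasDerivAt_line_nu (deriv^[k] (Gm F m)) σ ν hdiff
      rwa [← Function.iterate_succ_apply' deriv k (Gm F m)] at h
    have hd2 : HasDerivAt (fun ν : ℝ => Complex.exp (I * ↑ν * ↑t))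
        ((I * ↑t) * Complex.exp (I * ↑ν * ↑t)) ν := by
      have h := hasDerivAt_cexp_mul (I * (t:ℂ)) ν
      have he : ∀ s : ℝ, I * (t:ℂ) * (s:ℂ) = I * ↑s * ↑t := fun s => by push_cast; ring
      simpa [he] using h
    have h := hd1.mul hd2
    refine h.congr_deriv ?_
    ring
  have hint1 : Integrable
      (fun ν : ℝ => deriv^[k+1] (Gm F m) ((σ:ℂ) + ↑ν * I) * Complex.exp (I * ↑ν * ↑t)) :=
    integrable_of_bound (cont_integrand hF hσ m (k+1) t)
      (fun ν => bound_integrand hF (le_refl (k+1)) hM hσ t ν)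
  have hint0 : Integrable
      (fun ν : ℝ => deriv^[k] (Gm F m) ((σ:ℂ) + ↑ν * I) * Complex.exp (I * ↑ν * ↑t)) :=
    integrable_of_bound (cont_integrand hF hσ m k t)
      (fun ν => bound_integrand hF (Nat.le_succ k) hM hσ t ν)
  have hw'int : Integrable (fun ν : ℝ =>
      I * deriv^[k+1] (Gm F m) ((σ:ℂ) + ↑ν * I) * Complex.exp (I * ↑ν * ↑t)
        + (I * ↑t) * (deriv^[k] (Gm F m) ((σ:ℂ) + ↑ν * I) * Complex.exp (I * ↑ν * ↑t))) := by
    apply Integrable.add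
    · simpa [mul_assoc] using hint1.const_mul I
    · exact hint0.const_mul _
  have htend := tendsto_zero_of_bound (fun ν => bound_integrand hF (Nat.le_succ k) hM hσ t ν)
  have hzero := integral_deriv_eq_zero hw hw'int htend.1 htend.2
  rw [integral_add (by simpa [mul_assoc] using hint1.const_mul I) (hint0.const_mul _)] at hzero
  have e1 : (∫ ν : ℝ, I * deriv^[k+1] (Gm F m) ((σ:ℂ) + ↑ν * I) * Complex.exp (I * ↑ν * ↑t))
      = I * ∫ ν : ℝ, deriv^[k+1] (Gm F m) ((σ:ℂ) + ↑ν * I) * Complex.exp (I * ↑ν * ↑t) := by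
    simp_rw [mul_assoc]
    exact MeasureTheory.integral_const_mul I _
  have e2 : (∫ ν : ℝ, (I * ↑t) * (deriv^[k] (Gm F m) ((σ:ℂ) + ↑ν * I) * Complex.exp (I * ↑ν * ↑t)))
      = (I * ↑t) * ∫ ν : ℝ, deriv^[k] (Gm F m) ((σ:ℂ) + ↑ν * I) * Complex.exp (I * ↑ν * ↑t) :=
    MeasureTheory.integral_const_mul _ _
  rw [e1, e2] at hzero
  have h' : I * ((∫ ν : ℝ, deriv^[k+1] (Gm F m) ((σ:ℂ) + ↑ν * I) * Complex.exp (I * ↑ν * ↑t))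
      + ↑t * ∫ ν : ℝ, deriv^[k] (Gm F m) ((σ:ℂ) + ↑ν * I) * Complex.exp (I * ↑ν * ↑t)) = 0 := by
    linear_combination hzero
  have h'' := (mul_eq_zero.mp h').resolve_left Complex.I_ne_zero
  linear_combination h''


lemma shift (hF : StripSchwartz a F Fd) (ha : 0 < a) (m : ℕ) (t : ℝ) {σ : ℝ} (hσ : |σ| < a) :
    Complex.exp (↑t * ↑σ) * ∫ ν : ℝ, Gm F m ((σ:ℂ) + ↑ν * I) * Complex.exp (I * ↑ν * ↑t)
      = ∫ ν : ℝ, Gm F m ((((0:ℝ)):ℂ) + ↑ν * I) * Complex.exp (I * ↑ν * ↑t) := by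
  obtain ⟨M, hM⟩ := exists_M hF 1 (m + 2)
  set Φ : ℝ → ℂ := fun σ : ℝ =>
    Complex.exp (↑t * ↑σ) * ∫ ν : ℝ, Gm F m ((σ:ℂ) + ↑ν * I) * Complex.exp (I * ↑ν * ↑t) with hΦdef
  have hΦ : ∀ σ' : ℝ, |σ'| < a → HasDerivAt Φ 0 σ' := by
    intro σ' hσ'
    -- derivative of the integral part
    have hball : ∀ x ∈ ball σ' ((a - |σ'|) / 2), |x| < a := by
      intro x hx
      rw [mem_ball, Real.dist_eq] at hx
      cases abs_sub_abs_le_abs_sub x σ' |>.lt_or_ge 0 <;> nlinarith [abs_sub_abs_le_abs_sub x σ']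
    have hev : ∀ᶠ x in 𝓝 σ', |x| < a := by
      have hopen2 : IsOpen {x : ℝ | |x| < a} :=
        isOpen_lt (_root_.continuous_abs) continuous_const
      apply eventually_of_mem (IsOpen.mem_nhds hopen2 hσ')
      exact fun x hx => hx
    have hdA : HasDerivAt
        (fun s : ℝ => ∫ ν : ℝ, Gm F m ((s:ℂ) + ↑ν * I) * Complex.exp (I * ↑ν * ↑t))
        (∫ ν : ℝ, deriv (Gm F m) ((σ':ℂ) + ↑ν * I) * Complex.exp (I * ↑ν * ↑t)) σ' := by
      have eps_pos : (0:ℝ) < (a - |σ'|) / 2 := by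
        have := abs_nonneg σ'; linarith
      have main := hasDerivAt_integral_of_dominated_loc_of_deriv_le (μ := volume)
        (F := fun (s : ℝ) (ν : ℝ) => Gm F m ((s:ℂ) + ↑ν * I) * Complex.exp (I * ↑ν * ↑t))
        (F' := fun (s : ℝ) (ν : ℝ) => deriv (Gm F m) ((s:ℂ) + ↑ν * I) * Complex.exp (I * ↑ν * ↑t))
        (x₀ := σ') (bound := fun ν => (2 ^ 1 * (m + 1) ^ 1 * M) * ((1:ℝ) + ν ^ 2)⁻¹)
        (ball_mem_nhds σ' eps_pos)
        (hev.mono (fun s hs => (cont_integrand hF hs m 0 t).aestronglyMeasurable))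
        (integrable_of_bound (cont_integrand hF hσ' m 0 t)
          (fun ν => bound_integrand hF (Nat.zero_le 1) hM hσ' t ν))
        ((cont_integrand hF hσ' m 1 t).aestronglyMeasurable)
        (ae_of_all _ (fun ν s hs => by
          simpa using bound_integrand hF (le_refl 1) hM (hball s hs) t ν))
        ((integrable_inv_one_add_sq.const_mul _))
        (ae_of_all _ (fun ν s hs => by
          have hdiff := ((analyticG hF m 0) _ (mem_stripO (hball s hs) ν)).differentiableAt
          exact (hasDerivAt_line_sigma (Gm F m) s ν hdiff).mul_const _))
      exact main.2
    have hdE : HasDerivAt (fun s : ℝ => Complex.exp (↑t * ↑s)) (↑t * Complex.exp (↑t * ↑σ')) σ' :=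
      hasDerivAt_cexp_mul (t:ℂ) σ'
    have h := hdE.mul hdA
    have hparts := parts_one hF m 0 hσ' t
    rw [hΦdef]
    refine h.congr_deriv ?_
    have hit : (∫ ν : ℝ, deriv (Gm F m) ((σ':ℂ) + ↑ν * I) * Complex.exp (I * ↑ν * ↑t))
        = - (↑t * ∫ ν : ℝ, Gm F m ((σ':ℂ) + ↑ν * I) * Complex.exp (I * ↑ν * ↑t)) := by
      simp only [Function.iterate_zero_apply, zero_add, Function.iterate_one] at hparts
      linear_combination hparts
    rw [hit]
    ring
  -- constancy
  have key : ∀ x y : ℝ, |x| < a → |y| < a → x ≤ y → Φ y = Φ x := by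
    intro x y hx hy hxy
    have hsub : Set.Icc x y ⊆ {s : ℝ | |s| < a} := by
      intro s hs
      rw [Set.mem_setOf_eq, abs_lt]
      rcases abs_lt.mp hx with ⟨hx1, _⟩
      rcases abs_lt.mp hy with ⟨_, hy2⟩
      exact ⟨lt_of_lt_of_le hx1 hs.1, lt_of_le_of_lt hs.2 hy2⟩
    have hcont : ContinuousOn Φ (Set.Icc x y) := by
      intro s hs
      exact ((hΦ s (hsub hs)).continuousAt).continuousWithinAt
    have hderiv : ∀ s ∈ Set.Ico x y, HasDerivWithinAt Φ 0 (Set.Ici s) s := by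
      intro s hs
      exact (hΦ s (hsub ⟨hs.1, le_of_lt hs.2⟩)).hasDerivWithinAt
    exact constant_of_has_deriv_right_zero hcont hderiv y ⟨hxy, le_refl y⟩
  have h0 : |(0:ℝ)| < a := by simpa using ha
  rcases le_total σ 0 with h | h
  · have := key σ 0 hσ h0 h
    simpa [hΦdef] using this.symm
  · have := key 0 σ h0 hσ h
    simpa [hΦdef] using this


lemma parts_iter (hF : StripSchwartz a F Fd) (m : ℕ) {σ : ℝ} (hσ : |σ| < a) (t : ℝ) :
    ∀ k : ℕ, (t:ℂ) ^ k * ∫ ν : ℝ, Gm F m ((σ:ℂ) + ↑ν * I) * Complex.exp (I * ↑ν * ↑t)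
      = (-1) ^ k * ∫ ν : ℝ, deriv^[k] (Gm F m) ((σ:ℂ) + ↑ν * I) * Complex.exp (I * ↑ν * ↑t) := by
  intro k
  induction k with
  | zero => simp
  | succ k ih =>
    have hp := parts_one hF m k hσ t
    calc (t:ℂ) ^ (k+1) * ∫ ν : ℝ, Gm F m ((σ:ℂ) + ↑ν * I) * Complex.exp (I * ↑ν * ↑t)
        = (t:ℂ) * ((t:ℂ) ^ k * ∫ ν : ℝ, Gm F m ((σ:ℂ) + ↑ν * I) * Complex.exp (I * ↑ν * ↑t)) := by
          ring
      _ = (t:ℂ) * ((-1) ^ k *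
            ∫ ν : ℝ, deriv^[k] (Gm F m) ((σ:ℂ) + ↑ν * I) * Complex.exp (I * ↑ν * ↑t)) := by
          rw [ih]
      _ = (-1) ^ k * ((t:ℂ) *
            ∫ ν : ℝ, deriv^[k] (Gm F m) ((σ:ℂ) + ↑ν * I) * Complex.exp (I * ↑ν * ↑t)) := by
          ring
      _ = (-1) ^ k *
            (- ∫ ν : ℝ, deriv^[k+1] (Gm F m) ((σ:ℂ) + ↑ν * I) * Complex.exp (I * ↑ν * ↑t)) := by
          rw [hp]
      _ = (-1) ^ (k+1) *
            ∫ ν : ℝ, deriv^[k+1] (Gm F m) ((σ:ℂ) + ↑ν * I) * Complex.exp (I * ↑ν * ↑t) := by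
          ring

lemma hasDerivAt_Am (hF : StripSchwartz a F Fd) (ha : 0 < a) (m : ℕ) (t₀ : ℝ) :
    HasDerivAt (fun t : ℝ =>
        ∫ ν : ℝ, Gm F m ((((0:ℝ)):ℂ) + ↑ν * I) * Complex.exp (I * ↑ν * ↑t))
      (∫ ν : ℝ, Gm F (m+1) ((((0:ℝ)):ℂ) + ↑ν * I) * Complex.exp (I * ↑ν * ↑t₀)) t₀ := by
  have h0 : |(0:ℝ)| < a := by simpa using ha
  obtain ⟨M, hM⟩ := exists_M hF 0 (m + 1 + 2)
  obtain ⟨M₂, hM₂⟩ := exists_M hF 0 (m + 2)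
  have main := hasDerivAt_integral_of_dominated_loc_of_deriv_le (μ := volume)
    (F := fun (t : ℝ) (ν : ℝ) => Gm F m ((((0:ℝ)):ℂ) + ↑ν * I) * Complex.exp (I * ↑ν * ↑t))
    (F' := fun (t : ℝ) (ν : ℝ) => Gm F (m+1) ((((0:ℝ)):ℂ) + ↑ν * I) * Complex.exp (I * ↑ν * ↑t))
    (x₀ := t₀) (bound := fun ν => (2 ^ 0 * (m + 1 + 1) ^ 0 * M) * ((1:ℝ) + ν ^ 2)⁻¹)
    (ball_mem_nhds t₀ one_pos)
    (Eventually.of_forall fun s => (cont_integrand hF h0 m 0 s).aestronglyMeasurable)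
    (integrable_of_bound (cont_integrand hF h0 m 0 t₀)
      (fun ν => bound_integrand hF (le_refl 0) hM₂ h0 t₀ ν))
    ((cont_integrand hF h0 (m+1) 0 t₀).aestronglyMeasurable)
    (ae_of_all _ (fun ν s _ => by simpa using bound_integrand hF (le_refl 0) hM h0 s ν))
    (integrable_inv_one_add_sq.const_mul _)
    (ae_of_all _ (fun ν s _ => by
      have hd := (hasDerivAt_cexp_mul (I * (ν:ℂ)) s).const_mul
        (Gm F m ((((0:ℝ)):ℂ) + ↑ν * I))
      refine hd.congr_deriv ?_
      simp only [Gm, Complex.ofReal_zero, zero_add]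
      ring))
  exact main.2

lemma iteratedDeriv_g (hF : StripSchwartz a F Fd) (ha : 0 < a) {g : ℝ → ℂ}
    (hg : ∀ t : ℝ, g t = (1 / (2 * Real.pi) : ℂ) *
      ∫ ν : ℝ, F (Complex.I * (ν : ℂ)) * Complex.exp (Complex.I * (ν : ℂ) * (t : ℂ))) :
    ∀ m : ℕ, iteratedDeriv m g = fun t : ℝ => (1 / (2 * Real.pi) : ℂ) *
      ∫ ν : ℝ, Gm F m ((((0:ℝ)):ℂ) + ↑ν * I) * Complex.exp (I * ↑ν * ↑t) := by
  intro m
  induction m with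
  | zero =>
    funext t
    rw [iteratedDeriv_zero, hg t]
    congr 1
    have he : (fun ν : ℝ => F (Complex.I * (ν : ℂ)) * Complex.exp (Complex.I * (ν:ℂ) * (t:ℂ)))
        = fun ν : ℝ => Gm F 0 ((((0:ℝ)):ℂ) + ↑ν * I) * Complex.exp (I * ↑ν * ↑t) := by
      funext ν
      simp only [Gm, Complex.ofReal_zero, zero_add, pow_zero, one_mul]
      rw [mul_comm I (ν:ℂ)]
    rw [he]
  | succ m ih =>
    funext t
    rw [iteratedDeriv_succ, ih]
    exact ((hasDerivAt_Am hF ha m t).const_mul ((1 / (2 * Real.pi) : ℂ))).deriv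

lemma contDiff_g (hF : StripSchwartz a F Fd) (ha : 0 < a) {g : ℝ → ℂ}
    (hg : ∀ t : ℝ, g t = (1 / (2 * Real.pi) : ℂ) *
      ∫ ν : ℝ, F (Complex.I * (ν : ℂ)) * Complex.exp (Complex.I * (ν : ℂ) * (t : ℂ))) :
    ContDiff ℝ (⊤ : ℕ∞) g := by
  apply contDiff_of_differentiable_iteratedDeriv
  intro m _
  rw [iteratedDeriv_g hF ha hg m]
  intro t
  exact ((hasDerivAt_Am hF ha m t).const_mul ((1 / (2 * Real.pi) : ℂ))).differentiableAt

end Main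

lemma main {a : ℝ} (ha : 0 < a) (N m : ℕ) :
    ∃ C > (0 : ℝ), ∀ (F : ℂ → ℂ) (Fd : ℕ → ℂ → ℂ), StripSchwartz a F Fd →
      ∀ g : ℝ → ℂ,
      (∀ t : ℝ, g t = (1 / (2 * Real.pi) : ℂ) *
        ∫ ν : ℝ, F (Complex.I * (ν : ℂ)) * Complex.exp (Complex.I * (ν : ℂ) * (t : ℂ))) →
      ∀ M : ℝ,
      (∀ j ≤ N, ∀ z ∈ Strip a, (1 + ‖z‖) ^ (m + 2) * ‖Fd j z‖ ≤ M) →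
      ∀ t : ℝ,
        (1 + |t|) ^ N * Real.cosh (a * t) * ‖iteratedDeriv m g t‖ ≤ C * M := by
  refine ⟨3 * 4 ^ N * ((m : ℝ) + 1) ^ N, by positivity, ?_⟩
  intro F Fd hF g hg M hM t
  have h0mem : (0 : ℂ) ∈ Strip a := by
    simp only [Strip, Set.mem_setOf_eq, Complex.zero_re, abs_zero]
    exact le_of_lt ha
  have hM0 : (0:ℝ) ≤ M := le_trans (by positivity) (hM 0 (Nat.zero_le N) 0 h0mem)
  set ε : ℝ := min (a/2) (1+|t|)⁻¹ with hεdef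
  have hε0 : 0 < ε := lt_min (by linarith) (by positivity)
  have hεa2 : ε ≤ a/2 := min_le_left _ _
  have hεt : ε ≤ (1+|t|)⁻¹ := min_le_right _ _
  set σ : ℝ := if 0 ≤ t then -(a-ε) else (a-ε) with hσdef
  have hσabs : |σ| = a - ε := by
    rw [hσdef]; split
    · rw [abs_neg, _root_.abs_of_nonneg (by linarith)]
    · rw [_root_.abs_of_nonneg (by linarith)]
  have hσa : |σ| < a := by rw [hσabs]; linarith
  have hσt : t * σ = -((a-ε) * |t|) := by
    rw [hσdef]; split_ifs with h
    · rw [_root_.abs_of_nonneg h]; ring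
    · rw [_root_.abs_of_neg (lt_of_not_ge h)]; ring
  have hid := congrFun (iteratedDeriv_g hF ha hg m) t
  simp only [hid]
  rw [← shift hF ha m t hσa]
  have habs2 : ‖(1 / (2 * Real.pi) : ℂ)‖ = 1/(2*Real.pi) := by
    rw [show ((1 / (2 * Real.pi) : ℂ)) = (((1/(2*Real.pi):ℝ)):ℂ) by push_cast; ring]
    rw [Complex.norm_real, Real.norm_eq_abs, _root_.abs_of_pos (by positivity)]
  have habs3 : ‖Complex.exp ((t:ℂ) * (σ:ℂ))‖ = Real.exp (t*σ) := by
    rw [show ((t:ℂ) * (σ:ℂ)) = (((t*σ:ℝ)):ℂ) by push_cast; ring]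
    rw [Complex.norm_exp]
    simp
  rw [norm_mul, norm_mul, habs2, habs3]
  set A : ℂ := ∫ ν : ℝ, Gm F m ((σ:ℂ) + ↑ν * I) * Complex.exp (I * ↑ν * ↑t) with hAdef
  have hAk : ∀ k, k ≤ N → |t| ^ k * ‖A‖ ≤ (2^N * ((m:ℝ)+1)^N * M) * Real.pi := by
    intro k hk
    have hpi := parts_iter hF m hσa t k
    have h1 : |t| ^ k * ‖A‖ = ‖(t:ℂ)^k * A‖ := by
      rw [norm_mul, norm_pow, Complex.norm_real, Real.norm_eq_abs]
    rw [h1, hAdef, hpi, norm_mul]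
    have h2 : ‖(-1:ℂ)^k‖ = 1 := by simp
    rw [h2, one_mul]
    exact norm_integral_le_pi (fun ν => bound_integrand hF hk hM hσa t ν)
  have hNb : (1+|t|)^N * ‖A‖ ≤ 2^N * ((2^N * ((m:ℝ)+1)^N * M) * Real.pi) := by
    rw [add_pow, Finset.sum_mul]
    have hterm : ∀ k ∈ Finset.range (N+1),
        (1:ℝ)^k * |t|^(N-k) * (N.choose k : ℝ) * ‖A‖ ≤
        (N.choose k : ℝ) * ((2^N * ((m:ℝ)+1)^N * M) * Real.pi) := by
      intro k hk
      have := hAk (N-k) (Nat.sub_le N k)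
      calc (1:ℝ)^k * |t|^(N-k) * (N.choose k : ℝ) * ‖A‖
          = (N.choose k : ℝ) * (|t|^(N-k) * ‖A‖) := by ring
        _ ≤ (N.choose k : ℝ) * ((2^N * ((m:ℝ)+1)^N * M) * Real.pi) :=
            mul_le_mul_of_nonneg_left this (by positivity)
    refine le_trans (Finset.sum_le_sum hterm) ?_
    rw [← Finset.sum_mul]
    have hsum : (∑ k ∈ Finset.range (N+1), (N.choose k : ℝ)) = 2^N := by
      exact_mod_cast Nat.sum_range_choose N
    rw [hsum]
  have hcosh : Real.cosh (a*t) * Real.exp (t*σ) ≤ 3 := by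
    have h1 : Real.cosh (a*t) ≤ Real.exp (a*|t|) := by
      rw [Real.cosh_eq]
      have h2 := Real.exp_le_exp.mpr (le_abs_self (a*t))
      have h3 := Real.exp_le_exp.mpr (neg_le_abs (a*t))
      rw [abs_mul, _root_.abs_of_pos ha] at h2 h3
      linarith
    have h4 : Real.exp (a*|t|) * Real.exp (t*σ) = Real.exp (ε*|t|) := by
      rw [← Real.exp_add, hσt]; ring_nf
    have h5 : ε * |t| ≤ 1 := by
      have h6 : ε * |t| ≤ (1+|t|)⁻¹ * |t| := mul_le_mul_of_nonneg_right hεt (abs_nonneg t)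
      have h7 : (1+|t|)⁻¹ * |t| ≤ 1 := by
        calc (1+|t|)⁻¹ * |t| ≤ (1+|t|)⁻¹ * (1+|t|) := by
              apply mul_le_mul_of_nonneg_left (by linarith) (by positivity)
          _ = 1 := inv_mul_cancel₀ (by positivity)
      linarith
    calc Real.cosh (a*t) * Real.exp (t*σ)
        ≤ Real.exp (a*|t|) * Real.exp (t*σ) :=
          mul_le_mul_of_nonneg_right h1 (Real.exp_pos _).le
      _ = Real.exp (ε*|t|) := h4
      _ ≤ Real.exp 1 := Real.exp_le_exp.mpr h5
      _ ≤ 3 := by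
          have := Real.exp_one_lt_d9
          linarith
  calc (1 + |t|) ^ N * Real.cosh (a * t) *
        (1/(2*Real.pi) * (Real.exp (t*σ) * ‖A‖))
      = (Real.cosh (a*t) * Real.exp (t*σ)) * (1/(2*Real.pi)) *
        ((1+|t|)^N * ‖A‖) := by ring
    _ ≤ 3 * (1/(2*Real.pi)) * (2^N * ((2^N * ((m:ℝ)+1)^N * M) * Real.pi)) := by
        apply mul_le_mul (mul_le_mul_of_nonneg_right hcosh (by positivity)) hNb
          (mul_nonneg (by positivity) (norm_nonneg A)) (by positivity)
    _ ≤ (3 * 4 ^ N * ((m : ℝ) + 1) ^ N) * M := by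
        have hπ := Real.pi_pos
        have heq : 3 * (1/(2*Real.pi)) * (2^N * ((2^N * ((m:ℝ)+1)^N * M) * Real.pi))
            = (3/2) * (2^N * 2^N * ((m:ℝ)+1)^N * M) := by
          field_simp
        rw [heq, show (4:ℝ)^N = 2^N * 2^N by rw [← mul_pow]; norm_num]
        have hX : (0:ℝ) ≤ 2^N * 2^N * ((m:ℝ)+1)^N * M := by positivity
        linarith

end SS4

/-- **Continuity of the inverse Fourier transform from `𝓢(S_a)` into `𝓢_a(ℝ)`**
(the contour-shifting part of Lemma 2.2.4 of the paper). For `F ∈ 𝓢(S_a)`, the function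
`g t = (1/2π) ∫ F(iν) e^{iνt} dν` is smooth and lies in `𝓢_a(ℝ)`, and for each `N, m` there
is a constant `C > 0`, depending only on `a, N, m`, such that
`sup_t (1+|t|)^N cosh(at) |g^{(m)}(t)| ≤ C · max_{j ≤ N} sup_{z ∈ S_a} (1+|z|)^{m+2} |F^{(j)}(z)|`. -/
theorem stmt_4 (a : ℝ) (ha : 0 < a) :
    (∀ (F : ℂ → ℂ) (Fd : ℕ → ℂ → ℂ), StripSchwartz a F Fd → ∀ g : ℝ → ℂ,
      (∀ t : ℝ, g t = (1 / (2 * Real.pi) : ℂ) *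
        ∫ ν : ℝ, F (Complex.I * (ν : ℂ)) * Complex.exp (Complex.I * (ν : ℂ) * (t : ℂ))) →
      ContDiff ℝ (⊤ : ℕ∞) g ∧ WSchwartzBdd a g) ∧
    (∀ N m : ℕ, ∃ C > (0 : ℝ), ∀ (F : ℂ → ℂ) (Fd : ℕ → ℂ → ℂ), StripSchwartz a F Fd →
      ∀ g : ℝ → ℂ,
      (∀ t : ℝ, g t = (1 / (2 * Real.pi) : ℂ) *
        ∫ ν : ℝ, F (Complex.I * (ν : ℂ)) * Complex.exp (Complex.I * (ν : ℂ) * (t : ℂ))) →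
      ∀ M : ℝ,
      (∀ j ≤ N, ∀ z ∈ Strip a, (1 + ‖z‖) ^ (m + 2) * ‖Fd j z‖ ≤ M) →
      ∀ t : ℝ,
        (1 + |t|) ^ N * Real.cosh (a * t) * ‖iteratedDeriv m g t‖ ≤ C * M) := by
  constructor
  · intro F Fd hF g hg
    refine ⟨SS4.contDiff_g hF ha hg, ?_⟩
    intro N k
    obtain ⟨C, hC0, hC⟩ := SS4.main ha N k
    obtain ⟨M, hM⟩ := SS4.exists_M hF N (k + 2)
    exact ⟨C * M, fun t => hC F Fd hF g hg M hM t⟩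
  · intro N m
    obtain ⟨C, hC0, hC⟩ := SS4.main ha N m
    exact ⟨C, hC0, hC⟩
end

section
/- Let a > 0, let F ∈ 𝓢(S_a), let ε > 0 and let m ∈ ℕ. Then there exists an entire function h : ℂ → ℂ of uniform exponential type with rapid decay, i.e. there is R > 0 with sup_{z ∈ ℂ} e^{-R|Re z|} (1+|z|)^N |h(z)| < ∞ for every N ∈ ℕ, such that max_{N ≤ m, k ≤ m} sup_{z ∈ S_a} (1+|z|)^N |F^{(k)}(z) − h^{(k)}(z)| < ε. That is, Paley–Wiener functions are dense in the strip-Schwartz space 𝓢(S_a). -/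
open MeasureTheory Complex Real Filter Metric

noncomputable section KernelSec

/-- integrand family -/
def Kk (g : ℝ → ℂ) (w : ℂ) : ℂ := ∫ ξ : ℝ, g ξ * Complex.exp (ξ * w)

def GoodFn (g : ℝ → ℂ) : Prop := ContDiff ℝ (⊤ : ℕ∞) g ∧ ∀ ξ : ℝ, 1 < |ξ| → g ξ = 0

namespace GoodFn

variable {g : ℝ → ℂ}

lemma cont (hg : GoodFn g) : Continuous g := hg.1.continuous

lemma hcs (hg : GoodFn g) : HasCompactSupport g := by
  apply HasCompactSupport.intro (isCompact_Icc (a := (-1:ℝ)) (b := 1))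
  intro ξ hξ
  apply hg.2
  simp only [Set.mem_Icc, not_and_or, not_le] at hξ
  rcases hξ with h | h
  · rw [abs_of_neg (by linarith)]; linarith
  · rw [abs_of_pos (by linarith)]; linarith

lemma integrable (hg : GoodFn g) : Integrable g := hg.cont.integrable_of_hasCompactSupport hg.hcs

lemma integrand_integrable (hg : GoodFn g) (w : ℂ) :
    Integrable (fun ξ : ℝ => g ξ * Complex.exp (ξ * w)) := by
  apply Continuous.integrable_of_hasCompactSupport
  · exact hg.cont.mul (by fun_prop)
  · exact hg.hcs.mul_right

lemma norm_integrand_le (hg : GoodFn g) (w : ℂ) (ξ : ℝ) :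
    ‖g ξ * Complex.exp (ξ * w)‖ ≤ ‖g ξ‖ * Real.exp |w.re| := by
  rcases le_or_gt |ξ| 1 with hξ | hξ
  · rw [norm_mul]
    apply mul_le_mul_of_nonneg_left _ (norm_nonneg _)
    rw [Complex.norm_exp]
    apply Real.exp_le_exp.2
    have : ((ξ:ℂ) * w).re = ξ * w.re := by simp
    rw [this]
    calc ξ * w.re ≤ |ξ * w.re| := le_abs_self _
    _ = |ξ| * |w.re| := abs_mul _ _
    _ ≤ 1 * |w.re| := by apply mul_le_mul_of_nonneg_right hξ (abs_nonneg _)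
    _ = |w.re| := one_mul _
  · rw [hg.2 ξ hξ]
    simp only [zero_mul, norm_zero]
    positivity

lemma norm_Kk_le (hg : GoodFn g) (w : ℂ) : ‖Kk g w‖ ≤ (∫ ξ : ℝ, ‖g ξ‖) * Real.exp |w.re| := by
  calc ‖Kk g w‖ ≤ ∫ ξ : ℝ, ‖g ξ * Complex.exp (ξ * w)‖ := norm_integral_le_integral_norm _
  _ ≤ ∫ ξ : ℝ, ‖g ξ‖ * Real.exp |w.re| := by
      apply integral_mono (hg.integrand_integrable w).norm
        (hg.integrable.norm.mul_const _) (hg.norm_integrand_le w)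
  _ = (∫ ξ : ℝ, ‖g ξ‖) * Real.exp |w.re| := integral_mul_const _ _

lemma mul_id (hg : GoodFn g) : GoodFn (fun ξ : ℝ => (ξ:ℂ) * g ξ) := by
  constructor
  · exact (Complex.ofRealCLM.contDiff).mul hg.1
  · intro ξ hξ; simp [hg.2 ξ hξ]

lemma deriv' (hg : GoodFn g) : GoodFn (deriv g) := by
  constructor
  · exact (contDiff_infty_iff_deriv.mp hg.1).2
  · intro ξ hξ
    have hev : g =ᶠ[nhds ξ] (fun _ => 0) := by
      have : {x : ℝ | 1 < |x|} ∈ nhds ξ :=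
        (isOpen_lt continuous_const _root_.continuous_abs).mem_nhds hξ
      filter_upwards [this] with x hx using hg.2 x hx
    rw [hev.deriv_eq, deriv_const]

lemma hasDerivAt_Kk (hg : GoodFn g) (w₀ : ℂ) :
    HasDerivAt (Kk g) (Kk (fun ξ : ℝ => (ξ:ℂ) * g ξ) w₀) w₀ := by
  have := hasDerivAt_integral_of_dominated_loc_of_deriv_le (μ := volume)
    (F := fun (w : ℂ) (ξ : ℝ) => g ξ * Complex.exp (ξ * w))
    (F' := fun (w : ℂ) (ξ : ℝ) => (ξ:ℂ) * g ξ * Complex.exp (ξ * w))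
    (x₀ := w₀) (bound := fun ξ : ℝ => ‖(ξ:ℂ) * g ξ‖ * Real.exp (|w₀.re| + 1))
    (s := Metric.ball w₀ 1) (Metric.ball_mem_nhds w₀ one_pos) ?_ (hg.integrand_integrable w₀) ?_ ?_ ?_ ?_
  · exact this.2
  · filter_upwards with w
    exact ((hg.cont.mul (by fun_prop))).aestronglyMeasurable
  · exact ((hg.mul_id.cont.mul (by fun_prop))).aestronglyMeasurable
  · filter_upwards with ξ
    intro w hw
    calc ‖(ξ:ℂ) * g ξ * Complex.exp (ξ * w)‖
        ≤ ‖(ξ:ℂ) * g ξ‖ * Real.exp |w.re| := hg.mul_id.norm_integrand_le w ξ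
      _ ≤ ‖(ξ:ℂ) * g ξ‖ * Real.exp (|w₀.re| + 1) := by
          apply mul_le_mul_of_nonneg_left _ (norm_nonneg _)
          apply Real.exp_le_exp.2
          have : |w.re - w₀.re| ≤ 1 := by
            calc |w.re - w₀.re| = |(w - w₀).re| := by simp
            _ ≤ ‖w - w₀‖ := Complex.abs_re_le_norm _
            _ ≤ 1 := by
                rw [← dist_eq_norm]
                exact le_of_lt (mem_ball.mp hw)
          calc |w.re| ≤ |w₀.re| + |w.re - w₀.re| := by
                have := abs_sub_abs_le_abs_sub w.re w₀.re
                linarith [abs_sub_abs_le_abs_sub w.re w₀.re]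
            _ ≤ |w₀.re| + 1 := by linarith
  · exact (hg.mul_id.integrable.norm.mul_const _)
  · filter_upwards with ξ
    intro w hw
    have h1 : HasDerivAt (fun w : ℂ => (ξ:ℂ) * w) (ξ:ℂ) w := by
      simpa using (hasDerivAt_id w).const_mul (ξ:ℂ)
    have h2 : HasDerivAt (fun w : ℂ => Complex.exp (ξ * w)) (Complex.exp (ξ * w) * ξ) w :=
      h1.cexp
    have h3 := h2.const_mul (g ξ)
    exact h3.congr_deriv (by ring)

end GoodFn

end KernelSec

namespace GoodFn
variable {g : ℝ → ℂ}

lemma deriv_integrand (hg : GoodFn g) (w : ℂ) (ξ : ℝ) :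
    HasDerivAt (fun ξ : ℝ => g ξ * Complex.exp (ξ * w))
      (deriv g ξ * Complex.exp (ξ * w) + g ξ * (Complex.exp (ξ * w) * w)) ξ := by
  have h1 : HasDerivAt (fun ξ : ℝ => (ξ : ℂ) * w) w ξ := by
    have := (hasDerivAt_id ξ).smul_const w
    simpa [one_smul, Complex.real_smul] using this
  have h2 : HasDerivAt (fun ξ : ℝ => Complex.exp (ξ * w)) (Complex.exp (ξ * w) * w) ξ := h1.cexp
  exact ((hg.1.differentiable (by simp) ξ).hasDerivAt).mul h2

lemma ibp (hg : GoodFn g) (w : ℂ) : Kk (deriv g) w = -(w * Kk g w) := by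
  have hgd := hg.deriv'
  have key : (∫ ξ : ℝ, (deriv g ξ * Complex.exp (ξ * w) + g ξ * (Complex.exp (ξ * w) * w))) = 0 := by
    set φ : ℝ → ℂ := fun ξ => g ξ * Complex.exp (ξ * w) with hφ
    have hder : ∀ ξ : ℝ, HasDerivAt φ
        (deriv g ξ * Complex.exp (ξ * w) + g ξ * (Complex.exp (ξ * w) * w)) ξ :=
      fun ξ => hg.deriv_integrand w ξ
    have hsupp : Function.support (fun ξ : ℝ => deriv g ξ * Complex.exp (ξ * w)
        + g ξ * (Complex.exp (ξ * w) * w)) ⊆ Set.Ioc (-2 : ℝ) 2 := by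
      intro ξ hξ
      simp only [Function.mem_support] at hξ
      by_contra hmem
      rcases le_or_gt |ξ| 1 with h1 | h1
      · apply hmem
        constructor
        · linarith [neg_abs_le ξ]
        · linarith [le_abs_self ξ]
      · apply hξ
        rw [hg.2 ξ h1, hgd.2 ξ h1]
        simp
    rw [← intervalIntegral.integral_eq_integral_of_support_subset hsupp]
    have : ∀ x ∈ Set.uIcc (-2:ℝ) 2, DifferentiableAt ℝ φ x := fun x _ => (hder x).differentiableAt
    have hcont : ∀ ξ, deriv φ ξ = deriv g ξ * Complex.exp (ξ * w) + g ξ * (Complex.exp (ξ * w) * w) :=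
      fun ξ => (hder ξ).deriv
    rw [show (fun ξ : ℝ => deriv g ξ * Complex.exp (ξ * w) + g ξ * (Complex.exp (ξ * w) * w))
        = deriv φ from (funext fun ξ => (hcont ξ).symm)]
    rw [intervalIntegral.integral_deriv_eq_sub this]
    · rw [hφ]
      simp only []
      rw [hg.2 2 (by norm_num), hg.2 (-2) (by norm_num)]
      simp
    · rw [show deriv φ = (fun ξ : ℝ => deriv g ξ * Complex.exp (ξ * w) + g ξ * (Complex.exp (ξ * w) * w))
        from funext fun ξ => hcont ξ]
      apply Continuous.intervalIntegrable
      have c1 : Continuous (fun ξ : ℝ => Complex.exp (ξ * w)) := by fun_prop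
      exact ((hgd.cont.mul c1)).add (hg.cont.mul (c1.mul continuous_const))
  have hsplit : (∫ ξ : ℝ, (deriv g ξ * Complex.exp (ξ * w) + g ξ * (Complex.exp (ξ * w) * w)))
      = Kk (deriv g) w + w * Kk g w := by
    rw [MeasureTheory.integral_add (hgd.integrand_integrable w)]
    · unfold Kk
      congr 1
      rw [← MeasureTheory.integral_const_mul]
      congr 1; funext ξ; ring
    · have := (hg.integrand_integrable w).mul_const w
      simpa [mul_assoc] using this
  rw [hsplit] at key
  linear_combination key

lemma pow_norm_Kk_le (hg : GoodFn g) (N : ℕ) :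
    ∃ C : ℝ, 0 ≤ C ∧ ∀ w : ℂ, ‖w‖ ^ N * ‖Kk g w‖ ≤ C * Real.exp |w.re| := by
  induction N generalizing g with
  | zero =>
      refine ⟨∫ ξ : ℝ, ‖g ξ‖, integral_nonneg fun ξ => norm_nonneg _, fun w => ?_⟩
      simpa using hg.norm_Kk_le w
  | succ N ih =>
      obtain ⟨C, hC0, hC⟩ := ih hg.deriv'
      refine ⟨C, hC0, fun w => ?_⟩
      have : ‖w‖ ^ (N + 1) * ‖Kk g w‖ = ‖w‖ ^ N * ‖Kk (deriv g) w‖ := by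
        rw [hg.ibp w]
        rw [norm_neg, norm_mul]
        ring
      rw [this]
      exact hC w

lemma one_add_pow_norm_Kk_le (hg : GoodFn g) (N : ℕ) :
    ∃ C : ℝ, 0 ≤ C ∧ ∀ w : ℂ, (1 + ‖w‖) ^ N * ‖Kk g w‖ ≤ C * Real.exp |w.re| := by
  obtain ⟨C0, hC00, hC0⟩ := hg.pow_norm_Kk_le 0
  obtain ⟨CN, hCN0, hCN⟩ := hg.pow_norm_Kk_le N
  refine ⟨2 ^ N * (C0 + CN), by positivity, fun w => ?_⟩
  have hpow : (1 + ‖w‖) ^ N ≤ 2 ^ N * (1 + ‖w‖ ^ N) := by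
    rcases le_or_gt ‖w‖ 1 with h | h
    · calc (1 + ‖w‖) ^ N ≤ 2 ^ N := by
            apply pow_le_pow_left₀ (by positivity) (by linarith)
        _ ≤ 2 ^ N * (1 + ‖w‖ ^ N) := by
            nlinarith [pow_nonneg (norm_nonneg w) N, pow_pos (show (0:ℝ) < 2 by norm_num) N]
    · calc (1 + ‖w‖) ^ N ≤ (2 * ‖w‖) ^ N := by
            apply pow_le_pow_left₀ (by positivity) (by linarith)
        _ = 2 ^ N * ‖w‖ ^ N := mul_pow 2 _ N
        _ ≤ 2 ^ N * (1 + ‖w‖ ^ N) := by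
            nlinarith [pow_pos (show (0:ℝ) < 2 by norm_num) N]
  calc (1 + ‖w‖) ^ N * ‖Kk g w‖ ≤ (2 ^ N * (1 + ‖w‖ ^ N)) * ‖Kk g w‖ :=
        mul_le_mul_of_nonneg_right hpow (norm_nonneg _)
    _ = 2 ^ N * (‖Kk g w‖ + ‖w‖ ^ N * ‖Kk g w‖) := by ring
    _ ≤ 2 ^ N * (C0 * Real.exp |w.re| + CN * Real.exp |w.re|) := by
        apply mul_le_mul_of_nonneg_left _ (by positivity)
        apply add_le_add _ (hCN w)
        simpa using hC0 w
    _ = 2 ^ N * (C0 + CN) * Real.exp |w.re| := by ring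

lemma continuous_Kk (hg : GoodFn g) : Continuous (Kk g) :=
  Differentiable.continuous (fun w => (hg.hasDerivAt_Kk w).differentiableAt)
end GoodFn


section Bump
open FourierTransform RealInnerProductSpace

noncomputable def ψb : ContDiffBump (0:ℝ) := ⟨1/2, 1, by norm_num, by norm_num⟩

noncomputable def gb : ℝ → ℂ := fun ξ => ((ψb ξ : ℝ) : ℂ) * (((2*Real.pi)⁻¹ : ℝ) : ℂ)

lemma gb_good : GoodFn gb := by
  constructor
  · exact ((Complex.ofRealCLM.contDiff.comp ψb.contDiff).mul contDiff_const)
  · intro ξ hξ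
    unfold gb
    have : ψb ξ = 0 := by
      apply ψb.zero_of_le_dist
      show ψb.rOut ≤ dist ξ 0
      rw [Real.dist_eq, sub_zero]
      show (1:ℝ) ≤ |ξ|
      linarith
    rw [this]
    simp

lemma gb_zero : gb 0 = (((2*Real.pi)⁻¹ : ℝ) : ℂ) := by
  unfold gb
  have : ψb 0 = 1 := ψb.one_of_mem_closedBall (by simp [ψb])
  rw [this]; simp

lemma Kk_gb_eq_fourier (v : ℝ) : Kk gb (Complex.I * v) = 𝓕 gb (-(1/(2*Real.pi)) * v) := by
  rw [Real.fourier_eq']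
  unfold Kk
  congr 1
  funext ξ
  simp only [smul_eq_mul, RCLike.inner_apply, starRingEnd_apply, star_trivial]
  rw [mul_comm]
  congr 1
  have harg : -2 * Real.pi * (-(1/(2*Real.pi)) * v * ξ) = ξ * v := by
    field_simp
  rw [harg]
  push_cast
  congr 1
  ring

lemma decayIm (n : ℕ) : ∃ C : ℝ, 0 ≤ C ∧ ∀ v : ℝ,
    (1 + |v|) ^ n * ‖Kk gb (Complex.I * v)‖ ≤ C := by
  obtain ⟨C, hC0, hC⟩ := gb_good.one_add_pow_norm_Kk_le n
  refine ⟨C, hC0, fun v => ?_⟩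
  have hre : (Complex.I * (v:ℂ)).re = 0 := by simp
  have habs : ‖Complex.I * (v:ℂ)‖ = |v| := by
    rw [norm_mul]
    simp [Complex.norm_real]
  have := hC (Complex.I * v)
  rw [hre, habs] at this
  simpa using this

lemma KIm_cont : Continuous (fun v : ℝ => Kk gb (Complex.I * v)) := by
  apply gb_good.continuous_Kk.comp
  fun_prop

lemma norm_KIm_le : ∃ C : ℝ, 0 ≤ C ∧ ∀ v : ℝ,
    ‖Kk gb (Complex.I * v)‖ ≤ C * (1 + v^2)⁻¹ := by
  obtain ⟨C, hC0, hC⟩ := decayIm 2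
  refine ⟨C, hC0, fun v => ?_⟩
  have h1 : (1:ℝ) + v^2 ≤ (1+|v|)^2 := by nlinarith [abs_nonneg v, _root_.sq_abs v]
  have h2 : (0:ℝ) < 1 + v^2 := by positivity
  have h3 : (0:ℝ) < (1+|v|)^2 := by positivity
  have h4 : ‖Kk gb (Complex.I * v)‖ ≤ C / (1+|v|)^2 := by
    rw [le_div_iff₀ h3]
    linarith [hC v, mul_comm ((1 + |v|)^2) (‖Kk gb (Complex.I * v)‖)]
  calc ‖Kk gb (Complex.I * v)‖ ≤ C / (1+|v|)^2 := h4
    _ ≤ C / (1 + v^2) := div_le_div_of_nonneg_left hC0 h2 h1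
    _ = C * (1 + v^2)⁻¹ := div_eq_mul_inv _ _

lemma KIm_integrable : Integrable (fun v : ℝ => Kk gb (Complex.I * v)) := by
  obtain ⟨C, hC0, hC⟩ := norm_KIm_le
  apply Integrable.mono' (integrable_inv_one_add_sq.const_mul C) KIm_cont.aestronglyMeasurable
  filter_upwards with v using hC v

lemma fourier_gb_eq (s : ℝ) : 𝓕 gb s = Kk gb (Complex.I * ((-(2*Real.pi*s) : ℝ) : ℂ)) := by
  rw [Kk_gb_eq_fourier (-(2*Real.pi*s))]
  congr 1
  field_simp

lemma fourier_gb_integrable : Integrable (𝓕 gb) := by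
  have heq : 𝓕 gb = (fun s : ℝ => Kk gb (Complex.I * ((-(2*Real.pi)*s : ℝ) : ℂ))) := by
    funext s
    rw [fourier_gb_eq s]
    norm_num
  rw [heq]
  exact KIm_integrable.comp_mul_left' (R := -(2*Real.pi))
    (by have h : (0:ℝ) < 2*Real.pi := by positivity
        exact neg_ne_zero.mpr h.ne')

lemma mass_gb : (∫ v : ℝ, Kk gb (Complex.I * v)) = 1 := by
  have h1 : (∫ v : ℝ, Kk gb (Complex.I * v)) = ∫ v : ℝ, 𝓕 gb (-(1/(2*Real.pi)) * v) := by
    congr 1; funext v; exact Kk_gb_eq_fourier v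
  have h2 : (∫ v : ℝ, 𝓕 gb (-(1/(2*Real.pi)) * v)) = |(-(1/(2*Real.pi)))⁻¹| • ∫ s : ℝ, 𝓕 gb s :=
    MeasureTheory.Measure.integral_comp_mul_left (𝓕 gb) _
  have h3 : (∫ s : ℝ, 𝓕 gb s) = 𝓕⁻ (𝓕 gb) 0 := by
    rw [Real.fourierInv_eq]
    congr 1; funext v
    simp
  have h4 : 𝓕⁻ (𝓕 gb) 0 = gb 0 :=
    gb_good.integrable.fourierInv_fourier_eq fourier_gb_integrable gb_good.cont.continuousAt
  rw [h1, h2, h3, h4, gb_zero]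
  have hπ : (0:ℝ) < 2*Real.pi := by positivity
  have habs : |(-(1/(2*Real.pi)))⁻¹| = 2*Real.pi := by
    have : (-(1/(2*Real.pi)))⁻¹ = -(2*Real.pi) := by field_simp
    rw [this, abs_neg, abs_of_pos hπ]
  rw [habs, Complex.real_smul]
  push_cast
  field_simp

end Bump

section StripLemmas

variable {a : ℝ}

lemma stripO_isOpen : IsOpen (StripO a) :=
  isOpen_lt (Complex.continuous_re.abs) continuous_const

lemma stripO_subset_strip : StripO a ⊆ Strip a := fun z hz => (le_of_lt (hz : |z.re| < a) : |z.re| ≤ a)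

lemma stripO_convex : Convex ℝ (StripO a) := by
  intro z hz w hw s t hs ht hst
  simp only [StripO, Set.mem_setOf_eq] at *
  have hre : (s • z + t • w).re = s * z.re + t * w.re := by
    simp [Complex.add_re, Complex.real_smul, Complex.mul_re]
  rw [hre]
  calc |s * z.re + t * w.re| ≤ |s * z.re| + |t * w.re| := abs_add_le _ _
    _ = s * |z.re| + t * |w.re| := by
        rw [abs_mul, abs_mul, _root_.abs_of_nonneg hs, _root_.abs_of_nonneg ht]
    _ < a := by
        rcases eq_or_lt_of_le hs with h | h
        · rcases eq_or_lt_of_le ht with h' | h'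
          · exfalso; rw [← h, ← h'] at hst; simp at hst
          · have : s * |z.re| = 0 := by rw [← h, zero_mul]
            nlinarith [abs_nonneg w.re, abs_nonneg z.re]
        · nlinarith [abs_nonneg w.re, abs_nonneg z.re]

lemma sub_I_mem_stripO {z : ℂ} (hz : z ∈ StripO a) (u : ℝ) : z - Complex.I * u ∈ StripO a := by
  simp only [StripO, Set.mem_setOf_eq] at *
  have : (z - Complex.I * u).re = z.re := by simp
  rwa [this]

lemma I_mul_mem_stripO (ha : 0 < a) (u : ℝ) : (Complex.I * u) ∈ StripO a := by
  simp only [StripO, Set.mem_setOf_eq]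
  have : (Complex.I * (u:ℂ)).re = 0 := by simp
  rw [this]; simpa using ha

lemma strip_subset_closure (ha : 0 < a) : Strip a ⊆ closure (StripO a) := by
  intro z hz
  have hseq : ∀ n : ℕ, z - (z.re : ℂ) * ((1/(n+1) : ℝ) : ℂ) ∈ StripO a := by
    intro n
    simp only [StripO, Set.mem_setOf_eq]
    have h1 : (0:ℝ) < 1/(n+1) := by positivity
    have h2 : (1:ℝ)/(n+1) ≤ 1 := by
      rw [div_le_one (by positivity)]
      simp
    have hre : (z - (z.re : ℂ) * ((1/(n+1) : ℝ) : ℂ)).re = z.re * (1 - 1/(n+1)) := by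
      have : ((z.re:ℂ) * ((1/(n+1) : ℝ) : ℂ)) = (((z.re * (1/(n+1)) : ℝ)) : ℂ) := by push_cast; ring
      rw [Complex.sub_re, this, Complex.ofReal_re]
      ring
    rw [hre, abs_mul, _root_.abs_of_nonneg (by linarith : (0:ℝ) ≤ 1 - 1/(n+1))]
    have hza : |z.re| ≤ a := hz
    calc |z.re| * (1 - 1/(n+1)) ≤ a * (1 - 1/(n+1)) := by
          apply mul_le_mul_of_nonneg_right hza (by linarith)
      _ < a := by nlinarith
  have h0 : Filter.Tendsto (fun n : ℕ => ((1/(n+1) : ℝ) : ℂ)) Filter.atTop (nhds 0) := by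
    have := tendsto_one_div_add_atTop_nhds_zero_nat (𝕜 := ℝ)
    have h2 := (Complex.continuous_ofReal.tendsto 0).comp this
    simp only [Function.comp_def] at h2
    simpa using h2
  have htend : Filter.Tendsto (fun n : ℕ => z - (z.re:ℂ) * ((1/(n+1) : ℝ) : ℂ)) Filter.atTop
      (nhds z) := by
    have : Filter.Tendsto (fun n : ℕ => z - (z.re:ℂ) * ((1/(n+1) : ℝ) : ℂ)) Filter.atTop
        (nhds (z - (z.re:ℂ) * 0)) := Filter.Tendsto.const_sub _ (h0.const_mul _)
    simpa using this
  exact mem_closure_of_tendsto htend (Filter.Eventually.of_forall hseq)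

lemma analyticOnNhd_iteratedDeriv {f : ℂ → ℂ} {s : Set ℂ} (hs : IsOpen s)
    (hf : DifferentiableOn ℂ f s) (k : ℕ) : AnalyticOnNhd ℂ (iteratedDeriv k f) s := by
  induction k with
  | zero => simpa [iteratedDeriv_zero] using hf.analyticOnNhd hs
  | succ k ih => rw [iteratedDeriv_succ]; exact ih.deriv

end StripLemmas

section Scaled

variable {lam : ℝ}

/-- the scaled approximate-identity kernel on the imaginary axis -/
noncomputable def μf (lam : ℝ) : ℝ → ℂ :=
  fun u => ((lam : ℝ) : ℂ) * Kk gb (Complex.I * ((lam * u : ℝ) : ℂ))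

lemma μf_cont : Continuous (μf lam) := by
  apply continuous_const.mul
  exact KIm_cont.comp (continuous_const.mul continuous_id)

lemma μf_integrable (hlam : lam ≠ 0) : Integrable (μf lam) :=
  (KIm_integrable.comp_mul_left' hlam).const_mul _

lemma μf_norm (hlam : 0 ≤ lam) (u : ℝ) :
    ‖μf lam u‖ = lam * ‖Kk gb (Complex.I * ((lam * u : ℝ) : ℂ))‖ := by
  rw [μf, norm_mul, Complex.norm_real, Real.norm_eq_abs, _root_.abs_of_nonneg hlam]

lemma μf_mass (hlam : 0 < lam) : (∫ u : ℝ, μf lam u) = 1 := by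
  unfold μf
  rw [MeasureTheory.integral_const_mul]
  have := MeasureTheory.Measure.integral_comp_mul_left
    (fun v : ℝ => Kk gb (Complex.I * (v : ℂ))) lam
  rw [this, mass_gb, Complex.real_smul, mul_one, _root_.abs_of_pos (inv_pos.mpr hlam)]
  rw [show ((lam:ℝ):ℂ) * ((lam⁻¹ : ℝ):ℂ) = (((lam * lam⁻¹ : ℝ)):ℂ) by push_cast; ring]
  rw [mul_inv_cancel₀ hlam.ne']
  norm_num

lemma μf_norm_integral (hlam : 0 < lam) :
    (∫ u : ℝ, ‖μf lam u‖) = ∫ v : ℝ, ‖Kk gb (Complex.I * (v:ℂ))‖ := by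
  have heq : (fun u : ℝ => ‖μf lam u‖)
      = fun u => lam * ‖Kk gb (Complex.I * ((lam * u : ℝ) : ℂ))‖ :=
    funext (μf_norm hlam.le)
  rw [heq, MeasureTheory.integral_const_mul]
  have := MeasureTheory.Measure.integral_comp_mul_left
    (fun v : ℝ => ‖Kk gb (Complex.I * (v : ℂ))‖) lam
  rw [this, smul_eq_mul, _root_.abs_of_pos (inv_pos.mpr hlam), ← mul_assoc,
    mul_inv_cancel₀ hlam.ne', one_mul]

lemma kernel_poly_bound {mm : ℕ} {Cb : ℝ}
    (hCb : ∀ v : ℝ, (1+|v|)^(mm+3) * ‖Kk gb (Complex.I * (v:ℂ))‖ ≤ Cb)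
    (hlam : 1 ≤ lam) (u : ℝ) :
    (1+|u|)^mm * ‖μf lam u‖ ≤ (lam * Cb) * (1+(lam*u)^2)⁻¹ := by
  have hlam0 : (0:ℝ) < lam := lt_of_lt_of_le one_pos hlam
  set v := lam * u with hv
  set A := ‖Kk gb (Complex.I * (v:ℂ))‖ with hA
  have hA0 : 0 ≤ A := norm_nonneg _
  have hvabs : |v| = lam * |u| := by rw [hv, abs_mul, abs_of_pos hlam0]
  have h1 : 1 + |u| ≤ 1 + |v| := by
    rw [hvabs]; nlinarith [abs_nonneg u]
  have h2 : 1 + v^2 ≤ (1+|v|)^2 := by nlinarith [abs_nonneg v, _root_.sq_abs v]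
  have hpos : (0:ℝ) < 1 + v^2 := by positivity
  rw [μf_norm hlam0.le, ← hv, ← hA]
  rw [show (lam * Cb) * (1+v^2)⁻¹ = (lam * Cb)/(1+v^2) from (div_eq_mul_inv _ _).symm,
    le_div_iff₀ hpos]
  have hb : (0:ℝ) ≤ 1 + |v| := by positivity
  calc (1+|u|)^mm * (lam * A) * (1+v^2)
      ≤ (1+|v|)^mm * (lam * A) * ((1+|v|)^2) := by gcongr <;> positivity
    _ = lam * ((1+|v|)^(mm+2) * A) := by rw [pow_add]; ring
    _ ≤ lam * ((1+|v|)^(mm+3) * A) := by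
        apply mul_le_mul_of_nonneg_left _ hlam0.le
        apply mul_le_mul_of_nonneg_right _ hA0
        apply pow_le_pow_right₀ (by linarith [abs_nonneg v]) (by omega)
    _ ≤ lam * Cb := mul_le_mul_of_nonneg_left (hCb v) hlam0.le

lemma kernel_tail_bound {mm : ℕ} {Cb : ℝ}
    (hCb : ∀ v : ℝ, (1+|v|)^(mm+3) * ‖Kk gb (Complex.I * (v:ℂ))‖ ≤ Cb)
    (hlam : 1 ≤ lam) {del : ℝ} (hdel : 0 < del) (u : ℝ) (hu : del ≤ |u|) :
    (1+|u|)^mm * ‖μf lam u‖ ≤ (Cb/del) * (1+(lam*u)^2)⁻¹ := by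
  have hlam0 : (0:ℝ) < lam := lt_of_lt_of_le one_pos hlam
  set v := lam * u with hv
  set A := ‖Kk gb (Complex.I * (v:ℂ))‖ with hA
  have hA0 : 0 ≤ A := norm_nonneg _
  have hvabs : |v| = lam * |u| := by rw [hv, abs_mul, _root_.abs_of_pos hlam0]
  have h1 : 1 + |u| ≤ 1 + |v| := by rw [hvabs]; nlinarith [abs_nonneg u]
  have h2 : 1 + v^2 ≤ (1+|v|)^2 := by nlinarith [abs_nonneg v, _root_.sq_abs v]
  have h3 : 1 + lam * del ≤ 1 + |v| := by
    rw [hvabs]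
    have := mul_le_mul_of_nonneg_left hu hlam0.le
    linarith
  have hpos : (0:ℝ) < 1 + v^2 := by positivity
  have hposd : (0:ℝ) < del * (1 + v^2) := by positivity
  rw [μf_norm hlam0.le, ← hv, ← hA]
  rw [show (Cb/del) * (1+v^2)⁻¹ = Cb/(del * (1+v^2)) by rw [div_mul_eq_div_div]; exact div_eq_mul_inv _ _,
    le_div_iff₀ hposd]
  set Y := (1+|v|)^(mm+2) * A with hY
  have hY0 : 0 ≤ Y := by positivity
  have hkey : (1 + lam*del) * Y ≤ Cb := by
    calc (1 + lam*del) * Y ≤ (1+|v|) * Y := by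
          apply mul_le_mul_of_nonneg_right h3 hY0
      _ = (1+|v|)^(mm+3) * A := by rw [hY, pow_succ]; ring
      _ ≤ Cb := hCb v
  calc (1+|u|)^mm * (lam * A) * (del * (1+v^2))
      ≤ (1+|v|)^mm * (lam * A) * (del * ((1+|v|)^2)) := by gcongr <;> positivity
    _ = (lam * del) * Y := by rw [hY, pow_add]; ring
    _ ≤ (1 + lam*del) * Y := by
        apply mul_le_mul_of_nonneg_right _ hY0
        linarith
    _ ≤ Cb := hkey

end Scaled

set_option maxHeartbeats 1000000 in
/-- **Density of Paley–Wiener functions in the strip-Schwartz space `𝓢(S_a)`**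
(the scalar content of Lemma 2.2.4 ii) of the paper): given `F ∈ 𝓢(S_a)`, `ε > 0` and `m`,
there is an entire function `h` of uniform exponential type with rapid decay such that all
strip seminorms of order `≤ m` of `F − h` are smaller than `ε`. -/
theorem stmt_8 (a : ℝ) (ha : 0 < a) (F : ℂ → ℂ) (Fd : ℕ → ℂ → ℂ)
    (hF : StripSchwartz a F Fd) (ε : ℝ) (hε : 0 < ε) (m : ℕ) :
    ∃ h : ℂ → ℂ, Differentiable ℂ h ∧
      (∃ R > (0 : ℝ), ∀ N : ℕ, ∃ C : ℝ, ∀ z : ℂ,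
        Real.exp (-(R * |z.re|)) * (1 + ‖z‖) ^ N * ‖h z‖ ≤ C) ∧
      ∀ N ≤ m, ∀ k ≤ m, ∀ z ∈ Strip a,
        (1 + ‖z‖) ^ N * ‖Fd k z - iteratedDeriv k h z‖ < ε := by
  classical
  obtain ⟨hFc, hFdiff, hFd0, hFdk, hFdcont, hFsem⟩ := hF
  -- continuity of F along vertical line
  have hFIt_cont : Continuous (fun t : ℝ => F (Complex.I * t)) := by
    apply hFc.comp_continuous (by fun_prop)
    intro t
    exact stripO_subset_strip (I_mul_mem_stripO ha t)
  -- single seminorm constant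
  have hCCex : ∀ n : ℕ, ∃ C : ℝ, 0 ≤ C ∧ ∀ k ≤ n, ∀ z ∈ Strip a,
      (1+‖z‖)^m * ‖Fd k z‖ ≤ C := by
    intro n
    induction n with
    | zero =>
        obtain ⟨C, hC⟩ := hFsem m 0
        refine ⟨max C 0, le_max_right _ _, fun k hk z hz => ?_⟩
        interval_cases k
        exact (hC z hz).trans (le_max_left _ _)
    | succ n ih =>
        obtain ⟨C1, hC10, hC1⟩ := ih
        obtain ⟨C2, hC2⟩ := hFsem m (n+1)
        refine ⟨max C1 (max C2 0), le_trans hC10 (le_max_left _ _), fun k hk z hz => ?_⟩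
        rcases Nat.le_succ_iff.mp hk with h | h
        · exact (hC1 k h z hz).trans (le_max_left _ _)
        · rw [h]
          exact (hC2 z hz).trans ((le_max_left _ _).trans (le_max_right _ _))
  obtain ⟨CC, hCC0, hCC⟩ := hCCex (m+1)
  have hCC1 : ∀ k ≤ m+1, ∀ z ∈ Strip a, ‖Fd k z‖ ≤ CC := by
    intro k hk z hz
    have h1 : (1:ℝ) ≤ (1+‖z‖)^m := one_le_pow₀ (by linarith [norm_nonneg z])
    nlinarith [hCC k hk z hz, norm_nonneg (Fd k z)]
  -- decay of F on the vertical line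
  have hFdecay : ∀ N : ℕ, ∃ C : ℝ, 0 ≤ C ∧ ∀ t : ℝ,
      (1+|t|)^N * ‖F (Complex.I * t)‖ ≤ C * (1+t^2)⁻¹ := by
    intro N
    obtain ⟨C, hC⟩ := hFsem (N+2) 0
    refine ⟨max C 0, le_max_right _ _, fun t => ?_⟩
    have hIt : (Complex.I * (t:ℂ)) ∈ Strip a := stripO_subset_strip (I_mul_mem_stripO ha t)
    have hb := hC _ hIt
    rw [hFd0 _ hIt] at hb
    have habs : ‖Complex.I * (t:ℂ)‖ = |t| := by
      rw [norm_mul, Complex.norm_I, Complex.norm_real, Real.norm_eq_abs, one_mul]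
    rw [habs] at hb
    have hb' : (1+|t|)^(N+2) * ‖F (Complex.I * t)‖ ≤ max C 0 := hb.trans (le_max_left _ _)
    have hpos : (0:ℝ) < 1 + t^2 := by positivity
    rw [show max C 0 * (1+t^2)⁻¹ = max C 0 / (1+t^2) from (div_eq_mul_inv _ _).symm,
      le_div_iff₀ hpos]
    calc (1+|t|)^N * ‖F (Complex.I * t)‖ * (1+t^2)
        ≤ (1+|t|)^N * ‖F (Complex.I * t)‖ * (1+|t|)^2 := by
          gcongr
          nlinarith [abs_nonneg t, _root_.sq_abs t]
      _ = (1+|t|)^(N+2) * ‖F (Complex.I * t)‖ := by rw [pow_add]; ring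
      _ ≤ max C 0 := hb'
  have hFIt_int : Integrable (fun t : ℝ => F (Complex.I * t)) := by
    obtain ⟨C, hC0, hC⟩ := hFdecay 0
    apply Integrable.mono' (integrable_inv_one_add_sq.const_mul C)
      hFIt_cont.aestronglyMeasurable
    filter_upwards with t
    have := hC t
    simpa using this
  have hFint : ∀ N : ℕ, Integrable (fun t : ℝ => (1+|t|)^N * ‖F (Complex.I * t)‖) := by
    intro N
    obtain ⟨C, hC0, hC⟩ := hFdecay N
    apply Integrable.mono' (integrable_inv_one_add_sq.const_mul C)
      (((continuous_const.add _root_.continuous_abs).pow N).mul hFIt_cont.norm).aestronglyMeasurable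
    filter_upwards with t
    show ‖(1+|t|)^N * ‖F (Complex.I * t)‖‖ ≤ C * (1+t^2)⁻¹
    rw [Real.norm_eq_abs, _root_.abs_of_nonneg (by positivity : (0:ℝ) ≤ (1+|t|)^N * ‖F (Complex.I * t)‖)]
    exact hC t
  -- kernel constants
  obtain ⟨Cb, hCb0, hCb⟩ := decayIm (m+3)
  set I₀ : ℝ := ∫ v : ℝ, ‖Kk gb (Complex.I * (v:ℂ))‖ with hI₀
  have hI₀0 : 0 ≤ I₀ := integral_nonneg fun v => norm_nonneg _
  set AA : ℝ := 2^m * CC with hAA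
  have hAA0 : 0 ≤ AA := by positivity
  set del : ℝ := min 1 (ε/(4*(AA*I₀+1))) with hdel
  have hdel0 : 0 < del := lt_min one_pos (by positivity)
  have hdel1 : del ≤ 1 := min_le_left _ _
  have hdel2 : del ≤ ε/(4*(AA*I₀+1)) := min_le_right _ _
  set lam : ℝ := max 1 (8*CC*Cb*Real.pi/(del*ε) + 1) with hlam
  have hlam1 : 1 ≤ lam := le_max_left _ _
  have hlam0 : 0 < lam := lt_of_lt_of_le one_pos hlam1
  -- the entire function
  set g1 : ℝ → ℂ := fun ξ => (ξ:ℂ) * gb ξ with hg1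
  have hg1good : GoodFn g1 := gb_good.mul_id
  set hfun : ℂ → ℂ :=
    fun z => ∫ t : ℝ, F (Complex.I * t) * (((lam:ℝ):ℂ) * Kk gb (((lam:ℝ):ℂ) * (z - Complex.I * t)))
    with hhfun
  have hinner_cont : ∀ z : ℂ, Continuous fun t : ℝ => ((lam:ℝ):ℂ) * (z - Complex.I * t) := by
    intro z; fun_prop
  have hintegrand_cont : ∀ z : ℂ, Continuous fun t : ℝ =>
      F (Complex.I * t) * (((lam:ℝ):ℂ) * Kk gb (((lam:ℝ):ℂ) * (z - Complex.I * t))) := by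
    intro z
    exact hFIt_cont.mul (continuous_const.mul (gb_good.continuous_Kk.comp (hinner_cont z)))
  have hre_inner : ∀ (z : ℂ) (t : ℝ), ((((lam:ℝ):ℂ) * (z - Complex.I * t)).re) = lam * z.re := by
    intro z t
    have h1 : (z - Complex.I * t).re = z.re := by simp
    rw [show (((lam:ℝ):ℂ) * (z - Complex.I * t)).re
        = lam * (z - Complex.I * t).re - 0 * (z - Complex.I * t).im by
      rw [Complex.mul_re]; simp, h1]
    ring
  have hintegrand_int : ∀ z : ℂ, Integrable (fun t : ℝ =>
      F (Complex.I * t) * (((lam:ℝ):ℂ) * Kk gb (((lam:ℝ):ℂ) * (z - Complex.I * t)))) := by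
    intro z
    apply Integrable.mono'
      ((hFIt_int.norm.mul_const (lam * ((∫ ξ : ℝ, ‖gb ξ‖) * Real.exp (lam * |z.re|)))))
      (hintegrand_cont z).aestronglyMeasurable
    filter_upwards with t
    rw [norm_mul, norm_mul, Complex.norm_real, Real.norm_eq_abs, _root_.abs_of_pos hlam0]
    apply mul_le_mul_of_nonneg_left _ (norm_nonneg _)
    apply mul_le_mul_of_nonneg_left _ hlam0.le
    have := gb_good.norm_Kk_le (((lam:ℝ):ℂ) * (z - Complex.I * t))
    rwa [hre_inner z t, abs_mul, _root_.abs_of_pos hlam0] at this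
  have hdiff : Differentiable ℂ hfun := by
    intro z₀
    have key := hasDerivAt_integral_of_dominated_loc_of_deriv_le (μ := volume)
        (s := Metric.ball z₀ 1) (Metric.ball_mem_nhds z₀ one_pos)
      (F := fun (z : ℂ) (t : ℝ) =>
        F (Complex.I * t) * (((lam:ℝ):ℂ) * Kk gb (((lam:ℝ):ℂ) * (z - Complex.I * t))))
      (F' := fun (z : ℂ) (t : ℝ) =>
        F (Complex.I * t) * (((lam:ℝ):ℂ) * (Kk g1 (((lam:ℝ):ℂ) * (z - Complex.I * t)) * ((lam:ℝ):ℂ))))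
      (x₀ := z₀)
      (bound := fun t : ℝ =>
        ‖F (Complex.I * t)‖ * (lam * ((∫ ξ : ℝ, ‖g1 ξ‖) * Real.exp (lam * (|z₀.re|+1)) * lam)))
      ?_ ?_ ?_ ?_ ?_ ?_
    · exact key.2.differentiableAt
    · filter_upwards with z
      exact (hintegrand_cont z).aestronglyMeasurable
    · exact hintegrand_int z₀
    · apply Continuous.aestronglyMeasurable
      exact hFIt_cont.mul (continuous_const.mul
        ((hg1good.continuous_Kk.comp (hinner_cont z₀)).mul continuous_const))
    · filter_upwards with t
      intro z hz
      have hzre : |z.re| ≤ |z₀.re| + 1 := by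
        have h1 : |z.re - z₀.re| = |(z - z₀).re| := by simp
        have h2 : |(z-z₀).re| ≤ ‖z - z₀‖ := by
          exact Complex.abs_re_le_norm _
        have h3 : ‖z - z₀‖ < 1 := by
          rw [← dist_eq_norm]; exact Metric.mem_ball.mp hz
        have := abs_sub_abs_le_abs_sub z.re z₀.re
        linarith [h1 ▸ (h2.trans h3.le)]
      rw [norm_mul, norm_mul, norm_mul, Complex.norm_real, Real.norm_eq_abs,
        _root_.abs_of_pos hlam0]
      apply mul_le_mul_of_nonneg_left _ (norm_nonneg _)
      apply mul_le_mul_of_nonneg_left _ hlam0.le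
      apply mul_le_mul_of_nonneg_right _ hlam0.le
      have hK := hg1good.norm_Kk_le (((lam:ℝ):ℂ) * (z - Complex.I * t))
      rw [hre_inner z t, abs_mul, _root_.abs_of_pos hlam0] at hK
      apply hK.trans
      apply mul_le_mul_of_nonneg_left _ (integral_nonneg fun ξ => norm_nonneg _)
      apply Real.exp_le_exp.2
      apply mul_le_mul_of_nonneg_left hzre hlam0.le
    · exact (hFIt_int.norm.mul_const _)
    · filter_upwards with t
      intro z hz
      have hKd := hg1good
      have hinner : HasDerivAt (fun z : ℂ => ((lam:ℝ):ℂ) * (z - Complex.I * t)) ((lam:ℝ):ℂ) z := by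
        simpa using ((hasDerivAt_id z).sub_const (Complex.I * t)).const_mul ((lam:ℝ):ℂ)
      have hKder := (gb_good.hasDerivAt_Kk (((lam:ℝ):ℂ) * (z - Complex.I * t))).comp z hinner
      exact ((hKder.const_mul ((lam:ℝ):ℂ)).const_mul (F (Complex.I * t)))
  -- type bound
  have htype : ∀ N : ℕ, ∃ C : ℝ, ∀ z : ℂ,
      Real.exp (-(lam * |z.re|)) * (1+‖z‖)^N * ‖hfun z‖ ≤ C := by
    intro N
    obtain ⟨CK, hCK0, hCK⟩ := gb_good.one_add_pow_norm_Kk_le N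
    refine ⟨lam * CK * ∫ t : ℝ, (1+|t|)^N * ‖F (Complex.I * t)‖, fun z => ?_⟩
    have hW0 : (0:ℝ) ≤ Real.exp (-(lam*|z.re|)) * (1+‖z‖)^N := by positivity
    have step1 : ‖hfun z‖ ≤ ∫ t : ℝ, ‖F (Complex.I * t)‖
        * (lam * ‖Kk gb (((lam:ℝ):ℂ)*(z - Complex.I * t))‖) := by
      refine (norm_integral_le_integral_norm _).trans (le_of_eq ?_)
      congr 1; funext t
      rw [norm_mul, norm_mul, Complex.norm_real, Real.norm_eq_abs, _root_.abs_of_pos hlam0]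
    calc Real.exp (-(lam*|z.re|)) * (1+‖z‖)^N * ‖hfun z‖
        ≤ Real.exp (-(lam*|z.re|)) * (1+‖z‖)^N * ∫ t : ℝ, ‖F (Complex.I * t)‖
            * (lam * ‖Kk gb (((lam:ℝ):ℂ)*(z - Complex.I * t))‖) := by
          exact mul_le_mul_of_nonneg_left step1 hW0
      _ = ∫ t : ℝ, Real.exp (-(lam*|z.re|)) * (1+‖z‖)^N * (‖F (Complex.I * t)‖
            * (lam * ‖Kk gb (((lam:ℝ):ℂ)*(z - Complex.I * t))‖)) :=
          (MeasureTheory.integral_const_mul _ _).symm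
      _ ≤ ∫ t : ℝ, lam * CK * ((1+|t|)^N * ‖F (Complex.I * t)‖) := by
          apply integral_mono_of_nonneg (ae_of_all _ fun t => by positivity)
            ((hFint N).const_mul _)
          apply ae_of_all
          intro t
          set w := ((lam:ℝ):ℂ)*(z - Complex.I * t) with hw
          set X := Real.exp (lam * |z.re|) with hX
          have hEX : Real.exp (-(lam*|z.re|)) * X = 1 := by
            rw [hX, ← Real.exp_add, neg_add_cancel, Real.exp_zero]
          have hKb : (1+‖w‖)^N * ‖Kk gb w‖ ≤ CK * X := by
            have := hCK w
            rwa [hw, hre_inner z t, abs_mul, _root_.abs_of_pos hlam0, ← hX] at this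
          have hzn : (1+‖z‖) ≤ (1+|t|) * (1+‖w‖) := by
            have h1 : ‖z‖ ≤ ‖z - Complex.I*t‖ + |t| := by
              calc ‖z‖ = ‖(z - Complex.I*t) + Complex.I*t‖ := by ring_nf
                _ ≤ ‖z - Complex.I*t‖ + ‖Complex.I*(t:ℂ)‖ := norm_add_le _ _
                _ = ‖z - Complex.I*t‖ + |t| := by
                    rw [norm_mul, Complex.norm_I, one_mul, Complex.norm_real, Real.norm_eq_abs]
            have h2 : ‖z - Complex.I*t‖ ≤ ‖w‖ := by
              rw [hw, norm_mul, Complex.norm_real, Real.norm_eq_abs, _root_.abs_of_pos hlam0]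
              nlinarith [norm_nonneg (z - Complex.I*(t:ℂ))]
            nlinarith [norm_nonneg (z - Complex.I*(t:ℂ)), abs_nonneg t, norm_nonneg w]
          have hzn' : (1+‖z‖)^N * ‖Kk gb w‖ ≤ (1+|t|)^N * (CK * X) := by
            calc (1+‖z‖)^N * ‖Kk gb w‖ ≤ ((1+|t|)*(1+‖w‖))^N * ‖Kk gb w‖ := by
                  apply mul_le_mul_of_nonneg_right _ (norm_nonneg _)
                  exact pow_le_pow_left₀ (by positivity) hzn N
              _ = (1+|t|)^N * ((1+‖w‖)^N * ‖Kk gb w‖) := by rw [mul_pow]; ring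
              _ ≤ (1+|t|)^N * (CK * X) := by
                  apply mul_le_mul_of_nonneg_left hKb (by positivity)
          calc Real.exp (-(lam*|z.re|)) * (1+‖z‖)^N * (‖F (Complex.I * t)‖ * (lam * ‖Kk gb w‖))
              = ((1+‖z‖)^N * ‖Kk gb w‖) * (Real.exp (-(lam*|z.re|)) * (lam * ‖F (Complex.I * t)‖)) := by
                ring
            _ ≤ ((1+|t|)^N * (CK * X)) * (Real.exp (-(lam*|z.re|)) * (lam * ‖F (Complex.I * t)‖)) := by
                apply mul_le_mul_of_nonneg_right hzn' (by positivity)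
            _ = (lam * CK * ((1+|t|)^N * ‖F (Complex.I * t)‖)) * (Real.exp (-(lam*|z.re|)) * X) := by
                ring
            _ = lam * CK * ((1+|t|)^N * ‖F (Complex.I * t)‖) := by rw [hEX, mul_one]
      _ = lam * CK * ∫ t : ℝ, (1+|t|)^N * ‖F (Complex.I * t)‖ :=
          MeasureTheory.integral_const_mul _ _
  -- the convolution representations on the open strip
  set Gk : ℕ → ℂ → ℂ :=
    fun k z => ∫ u : ℝ, iteratedDeriv k F (z - Complex.I * u) * μf lam u with hGkdef
  have hμint : Integrable (μf lam) := μf_integrable hlam0.ne'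
  have hμmass : (∫ u : ℝ, μf lam u) = 1 := μf_mass hlam0
  have hμnormint : Integrable (fun u : ℝ => ‖μf lam u‖) := hμint.norm
  have hμI : (∫ u : ℝ, ‖μf lam u‖) = I₀ := μf_norm_integral hlam0
  have hFanal : ∀ k : ℕ, AnalyticOnNhd ℂ (iteratedDeriv k F) (StripO a) :=
    analyticOnNhd_iteratedDeriv stripO_isOpen hFdiff
  have hFder : ∀ k : ℕ, ∀ z ∈ StripO a,
      HasDerivAt (iteratedDeriv k F) (iteratedDeriv (k+1) F z) z := by
    intro k z hz
    rw [iteratedDeriv_succ]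
    exact ((hFanal k) z hz).differentiableAt.hasDerivAt
  have hiFcontu : ∀ k : ℕ, ∀ z ∈ StripO a,
      Continuous fun u : ℝ => iteratedDeriv k F (z - Complex.I * u) := by
    intro k z hz
    have hcont : ContinuousOn (iteratedDeriv k F) (StripO a) := fun w hw =>
      ((hFanal k) w hw).differentiableAt.continuousAt.continuousWithinAt
    exact hcont.comp_continuous (by fun_prop) (fun u => sub_I_mem_stripO hz u)
  have hiFbdd : ∀ k ≤ m+1, ∀ z ∈ StripO a, ‖iteratedDeriv k F z‖ ≤ CC := by
    intro k hk z hz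
    rw [← hFdk k z hz]
    exact hCC1 k hk z (stripO_subset_strip hz)
  have hiFwt : ∀ k ≤ m+1, ∀ z ∈ StripO a, (1+‖z‖)^m * ‖iteratedDeriv k F z‖ ≤ CC := by
    intro k hk z hz
    rw [← hFdk k z hz]
    exact hCC k hk z (stripO_subset_strip hz)
  have hGint : ∀ k ≤ m+1, ∀ z ∈ StripO a,
      Integrable (fun u : ℝ => iteratedDeriv k F (z - Complex.I * u) * μf lam u) :=
    fun k hk z hz => hμint.bdd_mul (hiFcontu k z hz).aestronglyMeasurable
      (ae_of_all _ fun u => hiFbdd k hk _ (sub_I_mem_stripO hz u))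
  have hball : ∀ z₀ ∈ StripO a, ∀ z ∈ Metric.ball z₀ (a - |z₀.re|), z ∈ StripO a := by
    intro z₀ hz₀ z hz
    have h2 : |(z-z₀).re| ≤ ‖z-z₀‖ := by
      exact Complex.abs_re_le_norm _
    have h3 : ‖z-z₀‖ < a - |z₀.re| := by rw [← dist_eq_norm]; exact Metric.mem_ball.mp hz
    have h4 : |z.re - z₀.re| = |(z - z₀).re| := by simp
    have h5 := abs_sub_abs_le_abs_sub z.re z₀.re
    show |z.re| < a
    calc |z.re| ≤ |z₀.re| + |z.re - z₀.re| := by linarith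
      _ < a := by rw [h4]; linarith
  have hGderiv : ∀ k ≤ m, ∀ z₀ ∈ StripO a, HasDerivAt (Gk k) (Gk (k+1) z₀) z₀ := by
    intro k hk z₀ hz₀
    have hr : (0:ℝ) < a - |z₀.re| := sub_pos.mpr hz₀
    have key := hasDerivAt_integral_of_dominated_loc_of_deriv_le (μ := volume)
      (s := Metric.ball z₀ (a - |z₀.re|)) (Metric.ball_mem_nhds z₀ hr)
      (F := fun (z : ℂ) (u : ℝ) => iteratedDeriv k F (z - Complex.I * u) * μf lam u)
      (F' := fun (z : ℂ) (u : ℝ) => iteratedDeriv (k+1) F (z - Complex.I * u) * μf lam u)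
      (x₀ := z₀) (bound := fun u : ℝ => CC * ‖μf lam u‖)
      ?_ ?_ ?_ ?_ ?_ ?_
    · exact key.2
    · filter_upwards [Metric.ball_mem_nhds z₀ hr] with z hz
      exact ((hiFcontu k z (hball z₀ hz₀ z hz)).mul μf_cont).aestronglyMeasurable
    · exact hGint k (hk.trans (Nat.le_succ m)) z₀ hz₀
    · exact ((hiFcontu (k+1) z₀ hz₀).mul μf_cont).aestronglyMeasurable
    · apply ae_of_all
      intro u z hz
      rw [norm_mul]
      apply mul_le_mul_of_nonneg_right _ (norm_nonneg _)
      exact hiFbdd (k+1) (Nat.succ_le_succ hk) _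
        (sub_I_mem_stripO (hball z₀ hz₀ z hz) u)
    · exact hμnormint.const_mul CC
    · apply ae_of_all
      intro u z hz
      have hzu : z - Complex.I * u ∈ StripO a := sub_I_mem_stripO (hball z₀ hz₀ z hz) u
      have h1 := (hFder k _ hzu).comp z ((hasDerivAt_id z).sub_const (Complex.I * u))
      have h2 := h1.mul_const (μf lam u)
      simpa using h2
  have h0mem : (0:ℂ) ∈ StripO a := by
    show |(0:ℂ).re| < a
    simpa using ha
  have hEq0 : Set.EqOn hfun (Gk 0) (StripO a) := by
    have hA : AnalyticOnNhd ℂ hfun (StripO a) :=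
      (hdiff.differentiableOn).analyticOnNhd stripO_isOpen
    have hB : AnalyticOnNhd ℂ (Gk 0) (StripO a) := by
      apply DifferentiableOn.analyticOnNhd _ stripO_isOpen
      intro z hz
      exact (hGderiv 0 (Nat.zero_le m) z hz).differentiableAt.differentiableWithinAt
    apply hA.eqOn_of_preconnected_of_frequently_eq hB stripO_convex.isPreconnected h0mem
    have hyeq : ∀ y : ℝ, hfun (Complex.I * y) = Gk 0 (Complex.I * y) := by
      intro y
      have hGval : Gk 0 (Complex.I * y) = ∫ u : ℝ,
          (fun t : ℝ => F (Complex.I * t)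
            * (((lam:ℝ):ℂ) * Kk gb (((lam:ℝ):ℂ) * (Complex.I * (y:ℂ) - Complex.I * t)))) (y - u) := by
        show (∫ u : ℝ, iteratedDeriv 0 F (Complex.I * (y:ℂ) - Complex.I * u) * μf lam u) = _
        congr 1
        funext u
        have e1 : Complex.I * (y:ℂ) - Complex.I * (u:ℝ) = Complex.I * ((y - u : ℝ) : ℂ) := by
          push_cast; ring
        have e2 : ((lam:ℝ):ℂ) * (Complex.I * (y:ℂ) - Complex.I * ((y - u:ℝ):ℂ))
            = Complex.I * ((lam * u : ℝ) : ℂ) := by push_cast; ring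
        show iteratedDeriv 0 F (Complex.I * (y:ℂ) - Complex.I * u) * μf lam u
            = F (Complex.I * ((y-u:ℝ):ℂ))
              * (((lam:ℝ):ℂ) * Kk gb (((lam:ℝ):ℂ) * (Complex.I * (y:ℂ) - Complex.I * ((y-u:ℝ):ℂ))))
        rw [iteratedDeriv_zero, e2, ← e1]
        rfl
      have hsub := MeasureTheory.integral_sub_left_eq_self
        (fun t : ℝ => F (Complex.I * t)
          * (((lam:ℝ):ℂ) * Kk gb (((lam:ℝ):ℂ) * (Complex.I * (y:ℂ) - Complex.I * t)))) volume y
      rw [hGval, hsub]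
    have htendseq : Filter.Tendsto (fun n : ℕ => (Complex.I * (((1:ℝ)/(n+1) : ℝ):ℂ)))
        Filter.atTop (nhdsWithin 0 {(0:ℂ)}ᶜ) := by
      apply tendsto_nhdsWithin_of_tendsto_nhds_of_eventually_within
      · have h0 : Filter.Tendsto (fun n : ℕ => (((1:ℝ)/(n+1) : ℝ):ℂ)) Filter.atTop (nhds 0) := by
          have h1 := tendsto_one_div_add_atTop_nhds_zero_nat (𝕜 := ℝ)
          have h2 := (Complex.continuous_ofReal.tendsto 0).comp h1
          simp only [Function.comp_def] at h2
          simpa using h2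
        have := h0.const_mul (Complex.I)
        simpa using this
      · apply Filter.Eventually.of_forall
        intro n
        apply mul_ne_zero Complex.I_ne_zero
        rw [Complex.ofReal_ne_zero]
        positivity
    exact htendseq.frequently (Filter.Frequently.of_forall fun n => hyeq ((1:ℝ)/(n+1)))
  have hIter : ∀ k, k ≤ m → ∀ z ∈ StripO a, iteratedDeriv k hfun z = Gk k z := by
    intro k
    induction k with
    | zero =>
        intro _ z hz
        rw [iteratedDeriv_zero]
        exact hEq0 hz
    | succ k ih =>
        intro hk z hz
        rw [iteratedDeriv_succ]
        have hev : iteratedDeriv k hfun =ᶠ[nhds z] Gk k := by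
          filter_upwards [stripO_isOpen.mem_nhds hz] with w hw
          exact ih (Nat.le_of_succ_le hk) w hw
        rw [hev.deriv_eq]
        exact (hGderiv k (Nat.le_of_succ_le hk) z hz).deriv
  -- main estimate on the open strip
  have hEst : ∀ k ≤ m, ∀ z ∈ StripO a, (1+‖z‖)^m * ‖Fd k z - Gk k z‖ ≤ ε/2 := by
    intro k hk z hz
    set P : ℝ := (1+‖z‖)^m with hP
    have hP0 : (0:ℝ) < P := by positivity
    set f : ℂ → ℂ := iteratedDeriv k F with hf
    have hint1 : Integrable (fun u : ℝ => f z * μf lam u) := hμint.const_mul _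
    have hint2 : Integrable (fun u : ℝ => f (z - Complex.I * u) * μf lam u) :=
      hGint k (hk.trans (Nat.le_succ m)) z hz
    have hrep : Fd k z - Gk k z = ∫ u : ℝ, (f z - f (z - Complex.I * u)) * μf lam u := by
      have h1 : Fd k z = ∫ u : ℝ, f z * μf lam u := by
        rw [MeasureTheory.integral_const_mul, hμmass, mul_one, hFdk k z hz]
      rw [h1, hGkdef, ← MeasureTheory.integral_sub hint1 hint2]
      congr 1
      funext u
      ring
    set J : ℝ → ℝ := fun u => P * (‖f z - f (z - Complex.I * u)‖ * ‖μf lam u‖) with hJ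
    have hJ0 : ∀ u, 0 ≤ J u := fun u => by positivity
    have hJcont : Continuous J := continuous_const.mul
      (((continuous_const.sub (hiFcontu k z hz)).norm).mul μf_cont.norm)
    have hlarge : ∀ u : ℝ, J u ≤ 2*CC * ((1+|u|)^m * ‖μf lam u‖) := by
      intro u
      have hzu : z - Complex.I * u ∈ StripO a := sub_I_mem_stripO hz u
      have hb1 : P * ‖f z‖ ≤ CC := hiFwt k (hk.trans (Nat.le_succ m)) z hz
      have hprod : (1+‖z‖) ≤ (1+‖z - Complex.I * u‖) * (1+|u|) := by
        have h1 : ‖z‖ ≤ ‖z - Complex.I * u‖ + |u| := by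
          calc ‖z‖ = ‖(z - Complex.I * u) + Complex.I * u‖ := by ring_nf
            _ ≤ ‖z - Complex.I * u‖ + ‖Complex.I * (u:ℂ)‖ := norm_add_le _ _
            _ = ‖z - Complex.I * u‖ + |u| := by
                rw [norm_mul, Complex.norm_I, one_mul, Complex.norm_real, Real.norm_eq_abs]
        nlinarith [norm_nonneg (z - Complex.I * (u:ℂ)), abs_nonneg u]
      have hb2 : P * ‖f (z - Complex.I * u)‖ ≤ CC * (1+|u|)^m := by
        have hwt := hiFwt k (hk.trans (Nat.le_succ m)) _ hzu
        calc P * ‖f (z - Complex.I * u)‖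
            ≤ ((1+‖z - Complex.I * u‖) * (1+|u|))^m * ‖f (z - Complex.I * u)‖ := by
              apply mul_le_mul_of_nonneg_right _ (norm_nonneg _)
              exact pow_le_pow_left₀ (by positivity) hprod m
          _ = (1+|u|)^m * ((1+‖z - Complex.I * u‖)^m * ‖f (z - Complex.I * u)‖) := by
              rw [mul_pow]; ring
          _ ≤ (1+|u|)^m * CC := by
              apply mul_le_mul_of_nonneg_left hwt (by positivity)
          _ = CC * (1+|u|)^m := mul_comm _ _
      have hone : (1:ℝ) ≤ (1+|u|)^m := one_le_pow₀ (by linarith [abs_nonneg u])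
      calc J u = (P * ‖f z - f (z - Complex.I * u)‖) * ‖μf lam u‖ := by rw [hJ]; ring
        _ ≤ (CC + CC*(1+|u|)^m) * ‖μf lam u‖ := by
            apply mul_le_mul_of_nonneg_right _ (norm_nonneg _)
            calc P * ‖f z - f (z - Complex.I * u)‖
                ≤ P * (‖f z‖ + ‖f (z - Complex.I * u)‖) :=
                  mul_le_mul_of_nonneg_left (norm_sub_le _ _) hP0.le
              _ = P * ‖f z‖ + P * ‖f (z - Complex.I * u)‖ := mul_add _ _ _
              _ ≤ CC + CC*(1+|u|)^m := add_le_add hb1 hb2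
        _ ≤ (2*CC*(1+|u|)^m) * ‖μf lam u‖ := by
            apply mul_le_mul_of_nonneg_right _ (norm_nonneg _)
            nlinarith [hCC0]
        _ = 2*CC * ((1+|u|)^m * ‖μf lam u‖) := by ring
    have hmajint : Integrable (fun u : ℝ => (lam*Cb) * (1+(lam*u)^2)⁻¹) := by
      have := (integrable_inv_one_add_sq.comp_mul_left' (R := lam) hlam0.ne')
      simpa using this.const_mul (lam*Cb)
    have hWle : ∀ u : ℝ, (1+|u|)^m * ‖μf lam u‖ ≤ (lam*Cb) * (1+(lam*u)^2)⁻¹ :=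
      kernel_poly_bound hCb hlam1
    have hWcont : Continuous (fun u : ℝ => (1+|u|)^m * ‖μf lam u‖) :=
      ((continuous_const.add _root_.continuous_abs).pow m).mul μf_cont.norm
    have hWint : Integrable (fun u : ℝ => (1+|u|)^m * ‖μf lam u‖) := by
      apply Integrable.mono' hmajint hWcont.aestronglyMeasurable
      apply ae_of_all
      intro u
      rw [Real.norm_eq_abs, _root_.abs_of_nonneg (by positivity)]
      exact hWle u
    have hJint : Integrable J := by
      apply Integrable.mono' (hWint.const_mul (2*CC)) hJcont.aestronglyMeasurable
      apply ae_of_all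
      intro u
      rw [Real.norm_eq_abs, _root_.abs_of_nonneg (hJ0 u)]
      exact hlarge u
    set S : Set ℝ := {u : ℝ | |u| ≤ del} with hSdef
    have hSmeas : MeasurableSet S :=
      (isClosed_le _root_.continuous_abs continuous_const).measurableSet
    have hsmall : ∀ u ∈ S, J u ≤ (AA * del) * ‖μf lam u‖ := by
      intro u hu
      have huδ : |u| ≤ del := hu
      have hu1 : |u| ≤ 1 := huδ.trans hdel1
      set s : Set ℂ := Metric.closedBall z 1 ∩ StripO a with hs
      have hconvs : Convex ℝ s := (convex_closedBall z 1).inter stripO_convex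
      have hz_s : z ∈ s := ⟨Metric.mem_closedBall_self one_pos.le, hz⟩
      have hzu_s : z - Complex.I * u ∈ s := by
        constructor
        · rw [Metric.mem_closedBall, dist_eq_norm]
          have : z - Complex.I * u - z = -(Complex.I * u) := by ring
          rw [this, norm_neg, norm_mul, Complex.norm_I, one_mul, Complex.norm_real,
            Real.norm_eq_abs]
          exact hu1
        · exact sub_I_mem_stripO hz u
      have hderiv : ∀ x ∈ s, HasDerivWithinAt f (iteratedDeriv (k+1) F x) s x :=
        fun x hx => (hFder k x hx.2).hasDerivWithinAt
      have hbnd : ∀ x ∈ s, ‖iteratedDeriv (k+1) F x‖ ≤ AA / P := by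
        intro x hx
        have hd : ‖z - x‖ ≤ 1 := by
          rw [← dist_eq_norm, dist_comm]
          exact Metric.mem_closedBall.mp hx.1
        have h1 : (1+‖z‖) ≤ 2*(1+‖x‖) := by
          have := norm_sub_norm_le z x
          linarith [norm_nonneg x]
        have h2 : P ≤ 2^m * (1+‖x‖)^m := by
          calc P = (1+‖z‖)^m := hP
            _ ≤ (2*(1+‖x‖))^m := pow_le_pow_left₀ (by positivity) h1 m
            _ = 2^m*(1+‖x‖)^m := mul_pow _ _ _
        have h3 : (1+‖x‖)^m * ‖iteratedDeriv (k+1) F x‖ ≤ CC :=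
          hiFwt (k+1) (Nat.succ_le_succ hk) x hx.2
        rw [le_div_iff₀ hP0]
        calc ‖iteratedDeriv (k+1) F x‖ * P ≤ ‖iteratedDeriv (k+1) F x‖ * (2^m*(1+‖x‖)^m) :=
              mul_le_mul_of_nonneg_left h2 (norm_nonneg _)
          _ = 2^m * ((1+‖x‖)^m * ‖iteratedDeriv (k+1) F x‖) := by ring
          _ ≤ 2^m * CC := mul_le_mul_of_nonneg_left h3 (by positivity)
          _ = AA := hAA.symm
      have hmv := hconvs.norm_image_sub_le_of_norm_hasDerivWithin_le hderiv hbnd hz_s hzu_s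
      have hdist : ‖(z - Complex.I * u) - z‖ = |u| := by
        have : z - Complex.I * u - z = -(Complex.I * u) := by ring
        rw [this, norm_neg, norm_mul, Complex.norm_I, one_mul, Complex.norm_real,
          Real.norm_eq_abs]
      rw [hdist] at hmv
      have hsub : ‖f z - f (z - Complex.I * u)‖ ≤ AA/P * |u| := by
        rw [norm_sub_rev]
        exact hmv
      calc J u = P * ‖f z - f (z - Complex.I * u)‖ * ‖μf lam u‖ := by rw [hJ]; ring
        _ ≤ P * (AA/P * |u|) * ‖μf lam u‖ := by
            apply mul_le_mul_of_nonneg_right _ (norm_nonneg _)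
            exact mul_le_mul_of_nonneg_left hsub hP0.le
        _ = AA * |u| * ‖μf lam u‖ := by field_simp
        _ ≤ AA * del * ‖μf lam u‖ := by
            apply mul_le_mul_of_nonneg_right _ (norm_nonneg _)
            exact mul_le_mul_of_nonneg_left huδ hAA0
    have hIS : (∫ u in S, J u) ≤ ε/4 := by
      have h1 : (∫ u in S, J u) ≤ ∫ u in S, (AA*del) * ‖μf lam u‖ :=
        MeasureTheory.setIntegral_mono_on hJint.integrableOn
          ((hμnormint.const_mul _).integrableOn) hSmeas hsmall
      have h2 : (∫ u in S, (AA*del) * ‖μf lam u‖) ≤ ∫ u : ℝ, (AA*del) * ‖μf lam u‖ :=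
        MeasureTheory.setIntegral_le_integral (hμnormint.const_mul _)
          (ae_of_all _ fun u => by positivity)
      have h3 : (∫ u : ℝ, (AA*del) * ‖μf lam u‖) = AA*del*I₀ := by
        rw [MeasureTheory.integral_const_mul, hμI]
      have h4 : AA*del*I₀ ≤ ε/4 := by
        have hne : AA*I₀+1 ≠ 0 := by positivity
        have hkey : (AA*I₀+1) * (ε/(4*(AA*I₀+1))) = ε/4 := by
          field_simp
        calc AA*del*I₀ = (AA*I₀)*del := by ring
          _ ≤ (AA*I₀+1)*del := by nlinarith [hdel0]
          _ ≤ (AA*I₀+1)*(ε/(4*(AA*I₀+1))) := by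
              apply mul_le_mul_of_nonneg_left hdel2 (by positivity)
          _ = ε/4 := hkey
      linarith
    have hISc : (∫ u in Sᶜ, J u) ≤ ε/4 := by
      have htail : ∀ u ∈ Sᶜ, J u ≤ (2*CC) * ((Cb/del)*(1+(lam*u)^2)⁻¹) := by
        intro u hu
        have hud : del ≤ |u| := le_of_lt (not_le.mp hu)
        exact (hlarge u).trans (mul_le_mul_of_nonneg_left
          (kernel_tail_bound hCb hlam1 hdel0 u hud) (by positivity))
      have hmaj2int : Integrable (fun u : ℝ => (2*CC) * ((Cb/del)*(1+(lam*u)^2)⁻¹)) := by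
        have := (integrable_inv_one_add_sq.comp_mul_left' (R := lam) hlam0.ne')
        simpa [mul_assoc] using (this.const_mul ((2*CC) * (Cb/del)))
      have h1 : (∫ u in Sᶜ, J u) ≤ ∫ u in Sᶜ, (2*CC) * ((Cb/del)*(1+(lam*u)^2)⁻¹) :=
        MeasureTheory.setIntegral_mono_on hJint.integrableOn hmaj2int.integrableOn
          hSmeas.compl htail
      have h2 : (∫ u in Sᶜ, (2*CC) * ((Cb/del)*(1+(lam*u)^2)⁻¹))
          ≤ ∫ u : ℝ, (2*CC) * ((Cb/del)*(1+(lam*u)^2)⁻¹) :=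
        MeasureTheory.setIntegral_le_integral hmaj2int (ae_of_all _ fun u => by positivity)
      have h3 : (∫ u : ℝ, (2*CC) * ((Cb/del)*(1+(lam*u)^2)⁻¹))
          = (2*CC) * ((Cb/del) * (lam⁻¹ * Real.pi)) := by
        have hcomp := MeasureTheory.Measure.integral_comp_mul_left
          (fun x : ℝ => (1+x^2)⁻¹) lam
        rw [show (fun u : ℝ => (2*CC) * ((Cb/del)*(1+(lam*u)^2)⁻¹))
            = fun u : ℝ => ((2*CC) * (Cb/del)) * (1+(lam*u)^2)⁻¹ by funext u; ring]
        rw [MeasureTheory.integral_const_mul, hcomp, integral_univ_inv_one_add_sq,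
          smul_eq_mul, _root_.abs_of_pos (inv_pos.mpr hlam0)]
        ring
      have h4 : (2*CC) * ((Cb/del) * (lam⁻¹ * Real.pi)) ≤ ε/4 := by
        have hX : del*ε*(8*CC*Cb*Real.pi/(del*ε)) = 8*CC*Cb*Real.pi := by
          field_simp
        have hLam : 8*CC*Cb*Real.pi/(del*ε) + 1 ≤ lam := le_max_right _ _
        have hεd : (0:ℝ) < del * ε := by positivity
        have hmul : del*ε*(8*CC*Cb*Real.pi/(del*ε) + 1) ≤ del*ε*lam :=
          mul_le_mul_of_nonneg_left hLam hεd.le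
        have hkey : 8*CC*Cb*Real.pi ≤ del*ε*lam := by nlinarith [hX, hmul, hεd]
        have hLHS : (2*CC) * ((Cb/del) * (lam⁻¹ * Real.pi)) = (2*CC*Cb*Real.pi)/(del*lam) := by
          field_simp
        rw [hLHS, div_le_iff₀ (by positivity : (0:ℝ) < del*lam)]
        nlinarith [hkey]
      linarith
    calc P * ‖Fd k z - Gk k z‖
        ≤ P * ∫ u : ℝ, ‖(f z - f (z - Complex.I * u)) * μf lam u‖ := by
          rw [hrep]
          exact mul_le_mul_of_nonneg_left (norm_integral_le_integral_norm _) hP0.le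
      _ = ∫ u : ℝ, J u := by
          rw [← MeasureTheory.integral_const_mul]
          congr 1
          funext u
          rw [norm_mul, hJ]
      _ = (∫ u in S, J u) + ∫ u in Sᶜ, J u :=
          (MeasureTheory.integral_add_compl hSmeas hJint).symm
      _ ≤ ε/4 + ε/4 := add_le_add hIS hISc
      _ = ε/2 := by ring
  -- pass to the closed strip
  have hiterCont : ∀ k : ℕ, Continuous (iteratedDeriv k hfun) := by
    intro k
    have han := analyticOnNhd_iteratedDeriv isOpen_univ (hdiff.differentiableOn) k
    exact continuous_iff_continuousAt.mpr fun z =>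
      ((han z (Set.mem_univ z)).differentiableAt).continuousAt
  have hfinal : ∀ k ≤ m, ∀ z ∈ Strip a,
      (1+‖z‖)^m * ‖Fd k z - iteratedDeriv k hfun z‖ ≤ ε/2 := by
    intro k hk z hz
    have hQcont : ContinuousWithinAt
        (fun w => (1+‖w‖)^m * ‖Fd k w - iteratedDeriv k hfun w‖) (StripO a) z := by
      apply ContinuousWithinAt.mono _ (stripO_subset_strip)
      have hcont : ContinuousOn
          (fun w => (1+‖w‖)^m * ‖Fd k w - iteratedDeriv k hfun w‖) (Strip a) :=
        (((continuous_const.add continuous_norm).pow m).continuousOn).mul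
          (((hFdcont k).sub (hiterCont k).continuousOn).norm)
      exact hcont z hz
    haveI hne : (nhdsWithin z (StripO a)).NeBot :=
      mem_closure_iff_nhdsWithin_neBot.mp (strip_subset_closure ha hz)
    apply le_of_tendsto hQcont
    filter_upwards [self_mem_nhdsWithin] with w hw
    rw [hIter k hk w hw]
    exact hEst k hk w hw
  refine ⟨hfun, hdiff, ⟨lam, hlam0, fun N => htype N⟩, ?_⟩
  intro N hN k hk z hz
  have h1 := hfinal k hk z hz
  have h2 : (1+‖z‖)^N ≤ (1+‖z‖)^m := pow_le_pow_right₀ (by linarith [norm_nonneg z]) hN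
  calc (1+‖z‖)^N * ‖Fd k z - iteratedDeriv k hfun z‖
      ≤ (1+‖z‖)^m * ‖Fd k z - iteratedDeriv k hfun z‖ :=
        mul_le_mul_of_nonneg_right h2 (norm_nonneg _)
    _ ≤ ε/2 := h1
    _ < ε := by linarith
end
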